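/- arXiv:1812.07239 — 7 statements merged into one kernel-verified Lean document; each statement's English description precedes it below -/
import Mathlib

section
/- If r1 and r2 are coprime complex polynomials and 1 < p < ∞, then the intersection of the subspaces r1·H^p and r2·H^p of the Hardy space H^p of the unit disc equals r1·r2·H^p. -/
open Polynomial Metric

/-- The Hardy space `H^p` of the open unit disc: holomorphic functions on the disc with
uniformly bounded integral means of order `p` on circles of radius `r < 1`. -/
noncomputable def HardySpace (p : ℝ) : Set (ℂ → ℂ) :=
  {f | DifferentiableOn ℂ f (ball (0 : ℂ) 1) ∧
    ∃ C : ℝ, ∀ r : ℝ, 0 ≤ r → r < 1 →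
      (∫ θ in (0:ℝ)..(2 * Real.pi),
        ‖f ((r : ℂ) * Complex.exp (θ * Complex.I))‖ ^ p) ≤ C}

lemma mem_ball_aux {r : ℝ} (hr0 : 0 ≤ r) (hr1 : r < 1) (θ : ℝ) :
    (r : ℂ) * Complex.exp (θ * Complex.I) ∈ ball (0 : ℂ) 1 := by
  simp only [mem_ball, dist_zero_right, norm_mul, Complex.norm_exp]
  simp [Complex.norm_real, abs_of_nonneg hr0, hr1]

lemma cont_aux (p : ℝ) (hp : 0 ≤ p) {f : ℂ → ℂ}
    (hf : DifferentiableOn ℂ f (ball (0 : ℂ) 1)) {r : ℝ} (hr0 : 0 ≤ r) (hr1 : r < 1) :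
    Continuous fun θ : ℝ => ‖f ((r : ℂ) * Complex.exp (θ * Complex.I))‖ ^ p := by
  have hc : Continuous fun θ : ℝ => (r : ℂ) * Complex.exp (θ * Complex.I) := by
    continuity
  have h1 : Continuous fun θ : ℝ => f ((r : ℂ) * Complex.exp (θ * Complex.I)) := by
    rw [← continuousOn_univ]
    exact hf.continuousOn.comp hc.continuousOn (fun θ _ => mem_ball_aux hr0 hr1 θ)
  exact (continuous_norm.comp h1).rpow_const (fun _ => Or.inr hp)

lemma two_rpow_bound {a b p : ℝ} (ha : 0 ≤ a) (hb : 0 ≤ b) (hp : 0 ≤ p) :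
    (a + b) ^ p ≤ 2 ^ p * (a ^ p + b ^ p) := by
  have h1 : a + b ≤ 2 * max a b := by
    rcases le_total a b with h | h <;> simp [max_eq_right, max_eq_left, h] <;> linarith
  have h2 : (a + b) ^ p ≤ (2 * max a b) ^ p :=
    Real.rpow_le_rpow (by linarith) h1 hp
  have h3 : (2 * max a b) ^ p = 2 ^ p * max a b ^ p :=
    Real.mul_rpow (by norm_num) (le_max_of_le_left ha)
  have h4 : max a b ^ p ≤ a ^ p + b ^ p := by
    rcases le_total a b with h | h
    · rw [max_eq_right h]; nlinarith [Real.rpow_nonneg ha p]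
    · rw [max_eq_left h]; nlinarith [Real.rpow_nonneg hb p]
  calc (a + b) ^ p ≤ 2 ^ p * max a b ^ p := by rw [← h3]; exact h2
    _ ≤ 2 ^ p * (a ^ p + b ^ p) := by
        have : (0:ℝ) ≤ 2 ^ p := Real.rpow_nonneg (by norm_num) p
        nlinarith

lemma HardySpace.add_mem {p : ℝ} (hp : 0 ≤ p) {f g : ℂ → ℂ}
    (hf : f ∈ HardySpace p) (hg : g ∈ HardySpace p) :
    (fun z => f z + g z) ∈ HardySpace p := by
  obtain ⟨hfd, C1, hC1⟩ := hf
  obtain ⟨hgd, C2, hC2⟩ := hg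
  refine ⟨hfd.add hgd, 2 ^ p * (C1 + C2), fun r hr0 hr1 => ?_⟩
  have hfc := (cont_aux p hp hfd hr0 hr1).intervalIntegrable (μ := MeasureTheory.volume) (0:ℝ) (2*Real.pi)
  have hgc := (cont_aux p hp hgd hr0 hr1).intervalIntegrable (μ := MeasureTheory.volume) (0:ℝ) (2*Real.pi)
  have hsc := (cont_aux p hp (hfd.add hgd) hr0 hr1).intervalIntegrable (μ := MeasureTheory.volume) (0:ℝ) (2*Real.pi)
  have hπ : (0:ℝ) ≤ 2 * Real.pi := by positivity
  have key : (∫ θ in (0:ℝ)..(2*Real.pi),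
      ‖(fun z => f z + g z) ((r:ℂ) * Complex.exp (θ * Complex.I))‖ ^ p)
      ≤ ∫ θ in (0:ℝ)..(2*Real.pi),
        (2 ^ p * (‖f ((r:ℂ) * Complex.exp (θ * Complex.I))‖ ^ p
          + ‖g ((r:ℂ) * Complex.exp (θ * Complex.I))‖ ^ p)) := by
    refine intervalIntegral.integral_mono_on (μ := MeasureTheory.volume) hπ hsc ((hfc.add hgc).const_mul _) fun θ _ => ?_
    set w := (r:ℂ) * Complex.exp (θ * Complex.I)
    calc ‖f w + g w‖ ^ p ≤ (‖f w‖ + ‖g w‖) ^ p :=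
          Real.rpow_le_rpow (norm_nonneg _) (norm_add_le _ _) hp
      _ ≤ 2 ^ p * (‖f w‖ ^ p + ‖g w‖ ^ p) :=
          two_rpow_bound (norm_nonneg _) (norm_nonneg _) hp
  have hsplit : (∫ θ in (0:ℝ)..(2*Real.pi),
      (2 ^ p * (‖f ((r:ℂ) * Complex.exp (θ * Complex.I))‖ ^ p
        + ‖g ((r:ℂ) * Complex.exp (θ * Complex.I))‖ ^ p)))
      = 2 ^ p * ((∫ θ in (0:ℝ)..(2*Real.pi),
          ‖f ((r:ℂ) * Complex.exp (θ * Complex.I))‖ ^ p)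
        + ∫ θ in (0:ℝ)..(2*Real.pi),
          ‖g ((r:ℂ) * Complex.exp (θ * Complex.I))‖ ^ p) := by
    rw [intervalIntegral.integral_const_mul, intervalIntegral.integral_add hfc hgc]
  have h2p : (0:ℝ) ≤ 2 ^ p := Real.rpow_nonneg (by norm_num) p
  calc (∫ θ in (0:ℝ)..(2*Real.pi),
      ‖(fun z => f z + g z) ((r:ℂ) * Complex.exp (θ * Complex.I))‖ ^ p)
      ≤ _ := key
    _ = _ := hsplit
    _ ≤ 2 ^ p * (C1 + C2) := by
        have := hC1 r hr0 hr1; have := hC2 r hr0 hr1; nlinarith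

lemma HardySpace.poly_mul_mem {p : ℝ} (hp : 0 ≤ p) (q : Polynomial ℂ) {f : ℂ → ℂ}
    (hf : f ∈ HardySpace p) : (fun z => q.eval z * f z) ∈ HardySpace p := by
  obtain ⟨hfd, C, hC⟩ := hf
  obtain ⟨M, hM⟩ := (isCompact_closedBall (0:ℂ) 1).exists_bound_of_continuousOn
    (q.continuous.continuousOn)
  have hM0 : 0 ≤ M := le_trans (norm_nonneg _) (hM 0 (by simp))
  have hMp : (0:ℝ) ≤ M ^ p := Real.rpow_nonneg hM0 p
  refine ⟨(q.differentiableOn).mul hfd, M ^ p * C, fun r hr0 hr1 => ?_⟩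
  have hqd : DifferentiableOn ℂ (fun z => q.eval z * f z) (ball (0:ℂ) 1) :=
    (q.differentiableOn).mul hfd
  have hfc := (cont_aux p hp hfd hr0 hr1).intervalIntegrable (μ := MeasureTheory.volume) (0:ℝ) (2*Real.pi)
  have hqc := (cont_aux p hp hqd hr0 hr1).intervalIntegrable (μ := MeasureTheory.volume) (0:ℝ) (2*Real.pi)
  have hπ : (0:ℝ) ≤ 2 * Real.pi := by positivity
  have key : (∫ θ in (0:ℝ)..(2*Real.pi),
      ‖(fun z => q.eval z * f z) ((r:ℂ) * Complex.exp (θ * Complex.I))‖ ^ p)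
      ≤ ∫ θ in (0:ℝ)..(2*Real.pi),
        (M ^ p * ‖f ((r:ℂ) * Complex.exp (θ * Complex.I))‖ ^ p) := by
    refine intervalIntegral.integral_mono_on (μ := MeasureTheory.volume) hπ hqc
      (hfc.const_mul _) fun θ _ => ?_
    set w := (r:ℂ) * Complex.exp (θ * Complex.I) with hw
    have hwball : w ∈ closedBall (0:ℂ) 1 :=
      ball_subset_closedBall (mem_ball_aux hr0 hr1 θ)
    have h1 : ‖q.eval w * f w‖ = ‖q.eval w‖ * ‖f w‖ :=
      norm_mul _ _
    calc ‖q.eval w * f w‖ ^ p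
        = ‖q.eval w‖ ^ p * ‖f w‖ ^ p := by
          rw [h1, Real.mul_rpow (norm_nonneg _) (norm_nonneg _)]
      _ ≤ M ^ p * ‖f w‖ ^ p := by
          refine mul_le_mul_of_nonneg_right ?_ (Real.rpow_nonneg (norm_nonneg _) p)
          exact Real.rpow_le_rpow (norm_nonneg _) (hM w hwball) hp
  calc (∫ θ in (0:ℝ)..(2*Real.pi),
      ‖(fun z => q.eval z * f z) ((r:ℂ) * Complex.exp (θ * Complex.I))‖ ^ p)
      ≤ _ := key
    _ = M ^ p * ∫ θ in (0:ℝ)..(2*Real.pi),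
          ‖f ((r:ℂ) * Complex.exp (θ * Complex.I))‖ ^ p :=
        intervalIntegral.integral_const_mul _ _
    _ ≤ M ^ p * C := mul_le_mul_of_nonneg_left (hC r hr0 hr1) hMp

/-- If `r1` and `r2` are coprime polynomials and `1 < p < ∞`, then
`r1·H^p ∩ r2·H^p = r1·r2·H^p`. -/
theorem inter_poly_mul_HardySpace (p : ℝ) (hp : 1 < p) (r1 r2 : Polynomial ℂ)
    (hcop : IsCoprime r1 r2) :
    {g : ℂ → ℂ | ∃ f ∈ HardySpace p, g = fun z => r1.eval z * f z} ∩
      {g : ℂ → ℂ | ∃ f ∈ HardySpace p, g = fun z => r2.eval z * f z} =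
    {g : ℂ → ℂ | ∃ f ∈ HardySpace p, g = fun z => (r1 * r2).eval z * f z} := by
  have hp0 : (0:ℝ) ≤ p := by linarith
  ext g
  constructor
  · rintro ⟨⟨f1, hf1, hg1⟩, f2, hf2, hg2⟩
    obtain ⟨a, b, hab⟩ := hcop
    refine ⟨fun z => a.eval z * f2 z + b.eval z * f1 z,
      HardySpace.add_mem hp0 (HardySpace.poly_mul_mem hp0 a hf2)
        (HardySpace.poly_mul_mem hp0 b hf1), ?_⟩
    funext z
    have e1 : r1.eval z * f1 z = r2.eval z * f2 z := by
      rw [← congrFun hg1 z, ← congrFun hg2 z]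
    have e2 : a.eval z * r1.eval z + b.eval z * r2.eval z = 1 := by
      have := congrArg (Polynomial.eval z) hab
      simpa using this
    rw [congrFun hg1 z]
    simp only [Polynomial.eval_mul]
    linear_combination (a.eval z * r1.eval z) * e1 - (r1.eval z * f1 z) * e2
  · rintro ⟨f, hf, hg⟩
    constructor
    · refine ⟨fun z => r2.eval z * f z, HardySpace.poly_mul_mem hp0 r2 hf, ?_⟩
      funext z; rw [congrFun hg z]; simp [Polynomial.eval_mul]; ring
    · refine ⟨fun z => r1.eval z * f z, HardySpace.poly_mul_mem hp0 r1 hf, ?_⟩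
      funext z; rw [congrFun hg z]; simp [Polynomial.eval_mul]; ring
end

section
/- Let ω = s/q be a rational function with s, q coprime complex polynomials, q having all roots on the unit circle, with deg(s) = n and deg(q) = m. Suppose ω is proper (n ≤ m), s(z) = z^{m−n} s̃(z) with s̃ self-inversive (s̃ = γ s̃^♯ with the same unimodular constant γ for which q = γ q^♯), where γ = q(0)/conj(q_m) with q_m the leading coefficient of q. Then ω maps the unit circle (minus the roots of q) into the real line: for all z with |z| = 1 and q(z) ≠ 0, s(z)/q(z) ∈ ℝ. -/
open Polynomial

/-- The conjugate-reversed polynomial. -/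
noncomputable def sharp (r : Polynomial ℂ) : Polynomial ℂ :=
  (r.map (starRingEnd ℂ)).reverse

theorem sharp_eval' (r : Polynomial ℂ) (z : ℂ) (hz : z ≠ 0) :
    (sharp r).eval z
      = z ^ r.natDegree * (starRingEnd ℂ) (r.eval ((starRingEnd ℂ) z)⁻¹) := by
  have : Invertible z⁻¹ := invertibleOfNonzero (inv_ne_zero hz)
  have hio : ⅟(z⁻¹) = z := invOf_eq_right_inv (by field_simp)
  have h := Polynomial.eval₂_reverse_mul_pow (RingHom.id ℂ) z⁻¹ (r.map (starRingEnd ℂ))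
  have he : ∀ (w : ℂ) (p : Polynomial ℂ), eval₂ (RingHom.id ℂ) w p = p.eval w := fun _ _ => rfl
  rw [hio, he, he] at h
  have h2 : (map (starRingEnd ℂ) r).eval z⁻¹
      = (starRingEnd ℂ) (r.eval ((starRingEnd ℂ) z)⁻¹) := by
    rw [Polynomial.eval_map]
    have : (z⁻¹ : ℂ) = (starRingEnd ℂ) (((starRingEnd ℂ) z)⁻¹) := by simp
    rw [this, Polynomial.eval₂_at_apply]
  rw [h2, Polynomial.natDegree_map_eq_of_injective (RingHom.injective _) r] at h
  have hz' : (z : ℂ) ^ r.natDegree ≠ 0 := pow_ne_zero _ hz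
  field_simp at h
  simp only [one_div, inv_pow] at h
  rw [show (sharp r) = (r.map (starRingEnd ℂ)).reverse from rfl, ← h, mul_left_comm, mul_inv_cancel₀ hz', mul_one]

/-- If `ω = s/q` is proper, `q` has all roots on the unit circle, `s = z^(m-n) s̃` with
`s̃` self-inversive with the same unimodular constant `γ = q(0)/conj(q_m)` as `q`, then
`ω` maps the unit circle (minus the roots of `q`) into the real line. -/
theorem real_on_circle_of_selfInversive (s q st : Polynomial ℂ) (γ : ℂ)
    (hcop : IsCoprime s q) (hq : q ≠ 0)
    (hqroots : ∀ z : ℂ, q.IsRoot z → ‖z‖ = 1)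
    (hprop : s.natDegree ≤ q.natDegree)
    (hγ : γ = q.coeff 0 / (starRingEnd ℂ) q.leadingCoeff)
    (hγabs : ‖γ‖ = 1)
    (hqsi : q = Polynomial.C γ * sharp q)
    (hs : s = Polynomial.X ^ (q.natDegree - s.natDegree) * st)
    (hstsi : st = Polynomial.C γ * sharp st) :
    ∀ z : ℂ, ‖z‖ = 1 → q.eval z ≠ 0 →
      ∃ t : ℝ, s.eval z / q.eval z = (t : ℂ) := by
  intro z hz hqz
  have hz0 : z ≠ 0 := by
    intro h; rw [h] at hz; simp at hz
  have h1 : z * (starRingEnd ℂ) z = 1 := by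
    rw [Complex.mul_conj]
    norm_cast
    rw [Complex.normSq_eq_norm_sq, hz]; norm_num
  have hzc : (starRingEnd ℂ) z = z⁻¹ := by
    field_simp
    linear_combination h1
  have key : ∀ r : Polynomial ℂ,
      (sharp r).eval z = z ^ r.natDegree * (starRingEnd ℂ) (r.eval z) := by
    intro r
    rw [sharp_eval' r z hz0, hzc, inv_inv]
  have hq' : q.eval z = γ * (z ^ q.natDegree * (starRingEnd ℂ) (q.eval z)) := by
    conv_lhs => rw [hqsi]
    rw [eval_mul, eval_C, key]
  have hst' : st.eval z = γ * (z ^ st.natDegree * (starRingEnd ℂ) (st.eval z)) := by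
    conv_lhs => rw [hstsi]
    rw [eval_mul, eval_C, key]
  by_cases hst0 : st = 0
  · refine ⟨0, ?_⟩
    rw [hs, hst0]; simp
  -- main case
  set d := q.natDegree - s.natDegree with hd
  have hdeg : s.natDegree = d + st.natDegree := by
    conv_lhs => rw [hs]
    rw [natDegree_mul (pow_ne_zero _ Polynomial.X_ne_zero) hst0, natDegree_X_pow]
  have hm : q.natDegree = d + d + st.natDegree := by omega
  have hse : s.eval z = z ^ d * st.eval z := by
    rw [hs]; simp
  have hcs : (starRingEnd ℂ) (s.eval z) = (z⁻¹) ^ d * (starRingEnd ℂ) (st.eval z) := by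
    rw [hse, map_mul, map_pow, hzc]
  rw [← Complex.conj_eq_iff_real, map_div₀]
  have hqz' : (starRingEnd ℂ) (q.eval z) ≠ 0 := by
    simpa using hqz
  rw [div_eq_div_iff hqz' hqz]
  rw [hcs, hse]
  rw [hm] at hq'
  have hinv : z ^ d * (z⁻¹) ^ d = 1 := by
    rw [← mul_pow, mul_inv_cancel₀ hz0, one_pow]
  linear_combination ((z⁻¹) ^ d * (starRingEnd ℂ) (st.eval z)) * hq'
    - (z ^ d * (starRingEnd ℂ) (q.eval z)) * hst'
    + (γ * (starRingEnd ℂ) (st.eval z) * (starRingEnd ℂ) (q.eval z) * z ^ (d + st.natDegree)) * hinv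
end

section
/- Let ω = s/q be a rational function with s, q coprime polynomials, q having all roots on the unit circle, such that ω(z) ∈ ℝ for all z on the unit circle with q(z) ≠ 0. Then deg(s) ≤ deg(q) ≤ 2·deg(s). -/
open Polynomial

lemma eval_reflect_aux (f : Polynomial ℂ) (N : ℕ) (hf : f.natDegree ≤ N) (z : ℂ)
    (hz : z ≠ 0) : eval z (reflect N f) = z ^ N * eval z⁻¹ f := by
  have hinv : Invertible (z⁻¹) := invertibleOfNonzero (inv_ne_zero hz)
  have h := eval₂_reflect_mul_pow (RingHom.id ℂ) (z⁻¹) N f hf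
  rw [invOf_eq_inv, inv_inv] at h
  have hid : ∀ (p : Polynomial ℂ) (x : ℂ), eval₂ (RingHom.id ℂ) x p = eval x p :=
    fun p x => rfl
  rw [hid, hid] at h
  have hzN : (z : ℂ) ^ N ≠ 0 := pow_ne_zero _ hz
  rw [← h]
  field_simp
  rw [one_div, mul_assoc, ← mul_pow, mul_inv_cancel₀ hz, one_pow, mul_one]

lemma natDegree_reflect_aux (f : Polynomial ℂ) (N : ℕ) (hf : f.natDegree ≤ N) (h0 : f ≠ 0) :
    (reflect N f).natDegree = N - f.natTrailingDegree := by
  have htd := f.natTrailingDegree_le_natDegree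
  apply le_antisymm
  · rw [natDegree_le_iff_coeff_eq_zero]
    intro i hi
    rw [coeff_reflect]
    by_cases hiN : i ≤ N
    · rw [revAt_le hiN]
      exact coeff_eq_zero_of_lt_natTrailingDegree (by omega)
    · rw [revAt_eq_self_of_lt (by omega)]
      exact coeff_eq_zero_of_natDegree_lt (by omega)
  · apply le_natDegree_of_ne_zero
    rw [coeff_reflect, revAt_le (by omega : N - f.natTrailingDegree ≤ N),
      (by omega : N - (N - f.natTrailingDegree) = f.natTrailingDegree)]
    simpa using h0

lemma circle_infinite_aux : {z : ℂ | ‖z‖ = 1}.Infinite := by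
  have hinj : Set.InjOn (fun t : ℝ => Complex.exp (t * Complex.I)) (Set.Ioo 0 1) := by
    intro a ha b hb hab
    rw [Complex.exp_eq_exp_iff_exists_int] at hab
    obtain ⟨n, hn⟩ := hab
    have hC : (a : ℂ) * Complex.I = ((b : ℝ) + n * (2 * Real.pi)) * Complex.I := by
      rw [hn]; ring_nf
    have hR : (a : ℝ) = b + n * (2 * Real.pi) := by
      have := mul_right_cancel₀ Complex.I_ne_zero hC
      exact_mod_cast this
    have hπ := Real.pi_gt_three
    have hn0 : n = 0 := by
      rcases lt_trichotomy n 0 with h | h | h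
      · have : (n : ℝ) ≤ -1 := by
          have h1 : n ≤ -1 := by omega
          exact_mod_cast h1
        nlinarith [ha.1, ha.2, hb.1, hb.2]
      · exact h
      · have : (1 : ℝ) ≤ n := by exact_mod_cast h
        nlinarith [ha.1, ha.2, hb.1, hb.2]
    rw [hn0] at hR
    simpa using hR
  have himg : ((fun t : ℝ => Complex.exp (t * Complex.I)) '' (Set.Ioo 0 1)).Infinite :=
    (Set.Ioo_infinite (by norm_num : (0:ℝ) < 1)).image hinj
  apply himg.mono
  rintro z ⟨t, _, rfl⟩
  exact Complex.norm_exp_ofReal_mul_I t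

/-- If `ω = s/q` with `s, q` coprime, all roots of `q` on the unit circle, and `ω` real
on the unit circle (where defined), then `deg s ≤ deg q ≤ 2 deg s`. -/
theorem degree_constraints_of_symmetric (s q : Polynomial ℂ)
    (hcop : IsCoprime s q) (hq : q ≠ 0)
    (hqroots : ∀ z : ℂ, q.IsRoot z → ‖z‖ = 1)
    (hreal : ∀ z : ℂ, ‖z‖ = 1 → q.eval z ≠ 0 →
      ∃ t : ℝ, s.eval z / q.eval z = (t : ℂ)) :
    s.natDegree ≤ q.natDegree ∧ q.natDegree ≤ 2 * s.natDegree := by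
  by_cases hs : s = 0
  · subst hs
    have hu : IsUnit q := isCoprime_zero_left.mp hcop
    simp [natDegree_eq_zero_of_isUnit hu]
  · set K := starRingEnd ℂ with hK
    set sc := s.map K with hsc
    set qc := q.map K with hqc
    have hKi : Function.Injective K := (starRingEnd ℂ).injective
    have hsc0 : sc ≠ 0 := fun h => hs ((Polynomial.map_eq_zero_iff hKi).mp h)
    have hqc0 : qc ≠ 0 := fun h => hq ((Polynomial.map_eq_zero_iff hKi).mp h)
    have hdsc : sc.natDegree = s.natDegree := natDegree_map_eq_of_injective hKi s
    have hdqc : qc.natDegree = q.natDegree := natDegree_map_eq_of_injective hKi q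
    set N := max s.natDegree q.natDegree with hN
    have hsN : s.natDegree ≤ N := le_max_left _ _
    have hqN : q.natDegree ≤ N := le_max_right _ _
    -- q(0) ≠ 0
    have hq0 : q.coeff 0 ≠ 0 := by
      intro h
      have hroot : q.IsRoot 0 := by simp [IsRoot, eval_zero, ← coeff_zero_eq_eval_zero, h]
      have := hqroots 0 hroot
      simp at this
    have hqct : qc.natTrailingDegree = 0 := by
      rw [natTrailingDegree_eq_zero]
      right
      rw [hqc, coeff_map]
      intro h
      exact hq0 (hKi (h.trans (map_zero K).symm))
    -- the key polynomial identity
    have key : s * reflect N qc = reflect N sc * q := by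
      apply eq_of_infinite_eval_eq
      apply Set.Infinite.mono _ (circle_infinite_aux.diff (finite_setOf_isRoot hq))
      rintro z ⟨hz1, hz2⟩
      simp only [Set.mem_setOf_eq] at hz1 hz2 ⊢
      have hqz : q.eval z ≠ 0 := hz2
      have hz0 : z ≠ 0 := by
        intro h; rw [h] at hz1; simp at hz1
      have h1 : z * K z = 1 := by
        rw [hK, Complex.mul_conj]
        norm_cast
        rw [Complex.normSq_eq_norm_sq, hz1]; norm_num
      have hzinv : K z = z⁻¹ := eq_inv_of_mul_eq_one_right h1
      have hsc_eval : eval z⁻¹ sc = K (eval z s) := by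
        rw [← hzinv, hsc, eval_map, eval₂_at_apply]
      have hqc_eval : eval z⁻¹ qc = K (eval z q) := by
        rw [← hzinv, hqc, eval_map, eval₂_at_apply]
      obtain ⟨t, ht⟩ := hreal z hz1 hqz
      rw [div_eq_iff hqz] at ht
      have hcross : eval z s * K (eval z q) = K (eval z s) * eval z q := by
        rw [ht, map_mul, hK, Complex.conj_ofReal]
        ring
      rw [eval_mul, eval_mul, eval_reflect_aux qc N (hdqc ▸ hqN) z hz0,
        eval_reflect_aux sc N (hdsc ▸ hsN) z hz0, hqc_eval, hsc_eval]
      linear_combination z ^ N * hcross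
    -- degree bookkeeping
    have hrq0 : reflect N qc ≠ 0 := fun h => hqc0 (reflect_eq_zero_iff.mp h)
    have hrs0 : reflect N sc ≠ 0 := fun h => hsc0 (reflect_eq_zero_iff.mp h)
    have hA : (s * reflect N qc).natDegree = s.natDegree + N := by
      rw [natDegree_mul hs hrq0, natDegree_reflect_aux qc N (hdqc ▸ hqN) hqc0, hqct]
      omega
    have hB : (reflect N sc * q).natDegree = (N - sc.natTrailingDegree) + q.natDegree := by
      rw [natDegree_mul hrs0 hq, natDegree_reflect_aux sc N (hdsc ▸ hsN) hsc0]
    have hν : sc.natTrailingDegree ≤ s.natDegree := hdsc ▸ sc.natTrailingDegree_le_natDegree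
    have hdeg : s.natDegree + N = (N - sc.natTrailingDegree) + q.natDegree := by
      rw [← hA, ← hB, key]
    omega
end

section
/- Let ω = s/q be a proper rational function with s, q coprime polynomials and all roots of q on the unit circle, deg(s) = n ≤ m = deg(q). For λ in the open unit disc, let k_λ(z) = (1 − conj(λ)z)^{−1} be the Szegő kernel in H². If g ∈ H² and r is a polynomial of degree < m satisfy s·k_λ = q·g + r (as functions on the disc), then g = c·k_λ where c = conj(λ^{m−n} s^♯(λ) / q^♯(λ)). -/
open Polynomial Metric

lemma reverse_eval_aux {μ : ℂ} (hμ : μ ≠ 0) (p : Polynomial ℂ) :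
    p.reverse.eval μ = μ ^ p.natDegree * p.eval μ⁻¹ := by
  have : Invertible μ⁻¹ := invertibleOfNonzero (inv_ne_zero hμ)
  have h := Polynomial.eval₂_reverse_mul_pow (RingHom.id ℂ) μ⁻¹ p
  simp only [eval₂_eq_eval_map, Polynomial.map_id] at h
  have hinv : (⅟ μ⁻¹ : ℂ) = μ := by
    have := invOf_eq_inv (μ⁻¹); rw [this, inv_inv]
  rw [hinv] at h
  field_simp at h
  rw [one_div] at h; rw [← h, inv_pow]; field_simp

lemma qrev_ne_zero {q : Polynomial ℂ} (hq : q ≠ 0)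
    (hqroots : ∀ z : ℂ, q.IsRoot z → ‖z‖ = 1)
    {μ : ℂ} (hμ : ‖μ‖ < 1) : q.reverse.eval μ ≠ 0 := by
  by_cases h0 : μ = 0
  · subst h0
    rw [show ((0:ℂ)) = Polynomial.eval 0 (Polynomial.X) by simp] at *
    simp only [Polynomial.eval_X] -- cleanup
    rw [show Polynomial.eval (0:ℂ) q.reverse = q.reverse.coeff 0 by
      simp [Polynomial.eval_zero, Polynomial.coeff_zero_eq_eval_zero]]
    rw [Polynomial.coeff_zero_reverse]
    exact Polynomial.leadingCoeff_ne_zero.mpr hq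
  · rw [reverse_eval_aux h0]
    refine mul_ne_zero (pow_ne_zero _ h0) ?_
    intro hroot
    have := hqroots μ⁻¹ hroot
    rw [norm_inv] at this
    have habs : ‖μ‖ ≠ 0 := by simpa using h0
    have : ‖μ‖ = 1 := by field_simp at this; linarith [this]
    linarith

lemma reverse_map_conj (p : Polynomial ℂ) :
    (p.map (starRingEnd ℂ)).reverse = (p.reverse).map (starRingEnd ℂ) := by
  unfold Polynomial.reverse
  rw [Polynomial.reflect_map, Polynomial.natDegree_map]

lemma sharp_eval (p : Polynomial ℂ) (lam : ℂ) :
    (sharp p).eval lam = (starRingEnd ℂ) (p.reverse.eval ((starRingEnd ℂ) lam)) := by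
  rw [sharp, reverse_map_conj, Polynomial.eval_map]
  have : lam = (starRingEnd ℂ) ((starRingEnd ℂ) lam) := by simp
  rw [this, Polynomial.eval₂_at_apply]
  simp

lemma exists_rt (s q : Polynomial ℂ) (hq : q ≠ 0)
    (hprop : s.natDegree ≤ q.natDegree)
    {μ : ℂ}
    (hB : q.reverse.eval μ ≠ 0)
    (hrev : ∀ p : Polynomial ℂ, μ ≠ 0 → p.reverse.eval μ = μ ^ p.natDegree * p.eval μ⁻¹) :
    ∃ rt : Polynomial ℂ, rt.degree < (q.natDegree : WithBot ℕ) ∧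
      s - Polynomial.C ((μ ^ (q.natDegree - s.natDegree) * s.reverse.eval μ) / q.reverse.eval μ) * q
        = (1 - Polynomial.C μ * Polynomial.X) * rt := by
  set m := q.natDegree with hm
  set n := s.natDegree with hn
  set A : ℂ := μ ^ (m - n) * s.reverse.eval μ with hA
  set B : ℂ := q.reverse.eval μ with hBdef
  set P : Polynomial ℂ := s - Polynomial.C (A / B) * q with hP
  have hdegP : P.degree ≤ (m : WithBot ℕ) := by
    apply (Polynomial.degree_sub_le _ _).trans
    apply max_le
    · exact (Polynomial.degree_le_natDegree).trans (by exact_mod_cast hprop)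
    · calc (Polynomial.C (A / B) * q).degree
          ≤ (Polynomial.C (A / B)).degree + q.degree := Polynomial.degree_mul_le _ _
        _ ≤ 0 + q.degree := add_le_add_left Polynomial.degree_C_le _
        _ = q.degree := zero_add _
        _ ≤ (m : WithBot ℕ) := Polynomial.degree_le_natDegree
  by_cases hμ : μ = 0
  · -- rt = P, divisor is 1
    refine ⟨P, ?_, by simp [hμ]⟩
    rw [Polynomial.degree_lt_iff_coeff_zero]
    intro k hk
    have hk' : m ≤ k := by exact_mod_cast hk
    rcases lt_or_eq_of_le hk' with hlt | heqk
    · have h1 : s.coeff k = 0 := Polynomial.coeff_eq_zero_of_natDegree_lt (lt_of_le_of_lt hprop hlt)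
      have h2 : q.coeff k = 0 := Polynomial.coeff_eq_zero_of_natDegree_lt hlt
      simp [hP, h1, h2]
    · subst heqk
      have hA0 : A = s.coeff m := by
        rw [hA, hμ]
        rcases lt_or_eq_of_le hprop with hlt | heq
        · rw [zero_pow (by omega), zero_mul,
            Polynomial.coeff_eq_zero_of_natDegree_lt hlt]
        · rw [heq]
          simp only [Nat.sub_self, pow_zero, one_mul]
          rw [show ((0:ℂ)) = (0:ℂ) by rfl]
          have : s.reverse.eval 0 = s.reverse.coeff 0 := by
            simp [Polynomial.coeff_zero_eq_eval_zero]
          rw [this, Polynomial.coeff_zero_reverse, Polynomial.leadingCoeff, ← hn, heq]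
      have hB0 : B = q.coeff m := by
        rw [hBdef, hμ]
        have : q.reverse.eval 0 = q.reverse.coeff 0 := by
          simp [Polynomial.coeff_zero_eq_eval_zero]
        rw [this, Polynomial.coeff_zero_reverse, Polynomial.leadingCoeff]
      have hBne : q.coeff m ≠ 0 := hB0 ▸ hB
      simp only [hP, Polynomial.coeff_sub, Polynomial.coeff_C_mul]
      rw [hA0, hB0]
      field_simp; simp
  · -- μ ≠ 0 case
    have hAval : A = μ ^ m * s.eval μ⁻¹ := by
      rw [hA, hrev s hμ, ← mul_assoc, ← pow_add, Nat.sub_add_cancel hprop]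
    have hBval : B = μ ^ m * q.eval μ⁻¹ := by rw [hBdef, hrev q hμ]
    have hqne : q.eval μ⁻¹ ≠ 0 := by
      intro h; rw [hBval, h, mul_zero] at hB; exact hB rfl
    have hroot : P.IsRoot μ⁻¹ := by
      have hAB : A / B = s.eval μ⁻¹ / q.eval μ⁻¹ := by
        rw [hAval, hBval, mul_div_mul_left _ _ (pow_ne_zero m hμ)]
      simp only [Polynomial.IsRoot, hP, Polynomial.eval_sub, Polynomial.eval_mul,
        Polynomial.eval_C, hAB]
      rw [div_mul_cancel₀ _ hqne, sub_self]
    obtain ⟨w, hw⟩ := (Polynomial.dvd_iff_isRoot.mpr hroot)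
    set rt : Polynomial ℂ := Polynomial.C (-μ⁻¹) * w with hrt
    have hfact : P = (1 - Polynomial.C μ * Polynomial.X) * rt := by
      rw [hw, hrt]
      have h1 : Polynomial.C μ * Polynomial.C μ⁻¹ = (1 : Polynomial ℂ) := by
        rw [← Polynomial.C_mul, mul_inv_cancel₀ hμ, Polynomial.C_1]
      have : (1 - Polynomial.C μ * Polynomial.X) * (Polynomial.C (-μ⁻¹))
          = Polynomial.X - Polynomial.C μ⁻¹ := by
        rw [map_neg]
        linear_combination (Polynomial.X : Polynomial ℂ) * h1
      rw [← mul_assoc, this]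
    refine ⟨rt, ?_, hfact⟩
    by_cases hrt0 : rt = 0
    · rw [hrt0, Polynomial.degree_zero]; exact WithBot.bot_lt_coe m
    · have hdiv : (1 - Polynomial.C μ * Polynomial.X).degree = 1 := by
        rw [show (1 - Polynomial.C μ * Polynomial.X : Polynomial ℂ)
            = Polynomial.C (-μ) * Polynomial.X + Polynomial.C 1 by
          rw [map_neg, Polynomial.C_1]; ring]
        exact Polynomial.degree_linear (neg_ne_zero.mpr hμ)
      have := Polynomial.degree_mul (p := 1 - Polynomial.C μ * Polynomial.X) (q := rt)
      rw [← hfact, hdiv] at this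
      rw [this] at hdegP
      rw [Polynomial.degree_eq_natDegree hrt0] at hdegP ⊢
      have : (1 : ℕ) + rt.natDegree ≤ m := by exact_mod_cast hdegP
      exact_mod_cast by omega

lemma key_analytic (q : Polynomial ℂ) (hq : q ≠ 0)
    (hqroots : ∀ z : ℂ, q.IsRoot z → ‖z‖ = 1)
    (f : ℂ → ℂ) (hf : ContinuousOn f (ball (0:ℂ) 1))
    (D : ℝ)
    (hD : ∀ r : ℝ, 0 ≤ r → r < 1 →
      (∫ θ in (0:ℝ)..(2*Real.pi),
        ‖f ((r:ℂ) * Complex.exp (θ * Complex.I))‖ ^ (2:ℕ)) ≤ D)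
    (p : Polynomial ℂ) (hp : p.degree < q.degree)
    (hpq : ∀ z : ℂ, ‖z‖ < 1 → q.eval z * f z = p.eval z) :
    p = 0 := by
  by_contra hp0
  -- reduce to coprime fraction
  set d := GCDMonoid.gcd p q with hd
  have hd0 : d ≠ 0 := gcd_ne_zero_of_right hq
  set p₁ := p / d with hp₁def
  set q₁ := q / d with hq₁def
  have hcop : IsCoprime p₁ q₁ := isCoprime_div_gcd_div_gcd hq
  have hpd : p = d * p₁ := by
    rw [hp₁def, EuclideanDomain.mul_div_cancel' hd0 (gcd_dvd_left p q)]
  have hqd : q = d * q₁ := by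
    rw [hq₁def, EuclideanDomain.mul_div_cancel' hd0 (gcd_dvd_right p q)]
  have hq₁0 : q₁ ≠ 0 := fun h => hq (by rw [hqd, h, mul_zero])
  have hp₁0 : p₁ ≠ 0 := fun h => hp0 (by rw [hpd, h, mul_zero])
  have hdegq₁ : 0 < q₁.degree := by
    have h1 : d.degree + p₁.degree < d.degree + q₁.degree := by
      rw [← Polynomial.degree_mul, ← Polynomial.degree_mul, ← hpd, ← hqd]; exact hp
    have := lt_of_add_lt_add_left h1
    calc (0 : WithBot ℕ) ≤ p₁.degree := Polynomial.zero_le_degree_iff.mpr hp₁0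
      _ < q₁.degree := this
  obtain ⟨α, hα⟩ := Complex.exists_root hdegq₁
  have habsα : ‖α‖ = 1 := by
    apply hqroots
    show q.eval α = 0
    rw [hqd, Polynomial.eval_mul, hα, mul_zero]
  have hp₁α : p₁.eval α ≠ 0 := by
    obtain ⟨a, b, hab⟩ := hcop
    intro h
    have := congrArg (Polynomial.eval α) hab
    simp [h, show Polynomial.eval α q₁ = 0 from hα] at this
  -- the reduced functional equation
  have hq₁f : ∀ z : ℂ, ‖z‖ < 1 → q₁.eval z * f z = p₁.eval z := by
    intro z hz
    have hdz : d.eval z ≠ 0 := by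
      intro h
      have : ‖z‖ = 1 := hqroots z (by rw [hqd]; simp [Polynomial.IsRoot, h])
      linarith
    have := hpq z hz
    rw [hpd, hqd, Polynomial.eval_mul, Polynomial.eval_mul, mul_assoc] at this
    exact mul_left_cancel₀ hdz this
  -- factor q₁
  obtain ⟨w, hw⟩ := Polynomial.dvd_iff_isRoot.mpr hα
  -- bound on w near α
  obtain ⟨z₀, _, hz₀'⟩ := (isCompact_closedBall α 1).exists_isMaxOn
    ⟨α, mem_closedBall_self zero_le_one⟩
    ((continuous_norm.comp (Polynomial.continuous w)).continuousOn)
  have hz₀ : ∀ z ∈ closedBall α 1, ‖w.eval z‖ ≤ ‖w.eval z₀‖ :=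
    fun z hz => hz₀' hz
  set W : ℝ := max (‖w.eval z₀‖) 1 with hW
  have hWpos : 0 < W := lt_of_lt_of_le one_pos (le_max_right _ _)
  have hWbound : ∀ z ∈ closedBall α 1, ‖w.eval z‖ ≤ W :=
    fun z hz => (hz₀ z hz).trans (le_max_left _ _)
  -- lower bound on p₁ near α
  set η : ℝ := ‖p₁.eval α‖ / 2 with hη
  have hηpos : 0 < η := by
    have := norm_pos_iff.mpr hp₁α
    rw [hη]; linarith
  have hcontp₁ : ContinuousAt (fun z => ‖p₁.eval z‖) α :=
    (continuous_norm.comp (Polynomial.continuous p₁)).continuousAt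
  obtain ⟨ρ₀, hρ₀pos, hρ₀⟩ := Metric.continuousAt_iff.mp hcontp₁ η hηpos
  set ρ : ℝ := min (ρ₀ / 2) 1 with hρ
  have hρpos : 0 < ρ := lt_min (by linarith) one_pos
  have hρle1 : ρ ≤ 1 := min_le_right _ _
  have hηbound : ∀ z : ℂ, ‖z - α‖ ≤ ρ → η ≤ ‖p₁.eval z‖ := by
    intro z hz
    have hdist : dist z α < ρ₀ := by
      rw [Complex.dist_eq]
      calc ‖z - α‖ ≤ ρ := hz
        _ ≤ ρ₀ / 2 := min_le_left _ _
        _ < ρ₀ := by linarith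
    have := hρ₀ hdist
    rw [Real.dist_eq, abs_lt] at this
    have h2 := this.1
    have : ‖p₁.eval α‖ = 2 * η := by rw [hη]; ring
    linarith [this ▸ h2]
  -- pointwise lower bound for |f|
  have hflow : ∀ z : ℂ, ‖z‖ < 1 → ‖z - α‖ ≤ ρ →
      η / (W * ‖z - α‖) ≤ ‖f z‖ := by
    intro z hz hzρ
    have hzα : z ≠ α := by
      intro h; rw [h] at hz; rw [habsα] at hz; exact absurd hz (lt_irrefl 1)
    have hzαabs : 0 < ‖z - α‖ := by
      simpa [sub_eq_zero] using norm_pos_iff.mpr (sub_ne_zero.mpr hzα)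
    have hq₁z : ‖q₁.eval z‖ ≤ ‖z - α‖ * W := by
      rw [hw, Polynomial.eval_mul]
      rw [norm_mul]
      have : ‖(Polynomial.X - Polynomial.C α).eval z‖ = ‖z - α‖ := by
        simp
      rw [this]
      apply mul_le_mul_of_nonneg_left _ (le_of_lt hzαabs) |>.trans (le_refl _)
      · exact hWbound z (by rw [mem_closedBall, Complex.dist_eq]; exact hzρ.trans hρle1)
    have heqz := hq₁f z hz
    have hηz := hηbound z hzρ
    rw [div_le_iff₀ (by positivity)]
    calc η ≤ ‖p₁.eval z‖ := hηz
      _ = ‖q₁.eval z‖ * ‖f z‖ := by rw [← norm_mul, heqz]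
      _ ≤ (‖z - α‖ * W) * ‖f z‖ := by
          apply mul_le_mul_of_nonneg_right hq₁z (norm_nonneg _)
      _ = ‖f z‖ * (W * ‖z - α‖) := by ring
  -- setup for the integral estimate
  set φ : ℝ := α.arg with hφ
  have hαexp : α = Complex.exp (φ * Complex.I) := by
    have := Complex.norm_mul_exp_arg_mul_I α
    rw [habsα] at this
    simpa using this.symm
  set ε : ℝ := min (ρ / 2) 1 with hε
  have hεpos : 0 < ε := lt_min (by linarith) one_pos
  have hεle1 : ε ≤ 1 := min_le_right _ _
  have hεleρ : ε ≤ ρ / 2 := min_le_left _ _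
  set K : ℝ := η / (2 * W) with hK
  have hKpos : 0 < K := by positivity
  have hmain : ∀ a : ℝ, 0 < a → a ≤ ε → 2 * K ^ 2 / a ≤ D := by
    intro a hapos haε
    set r : ℝ := 1 - a with hr
    have hr0 : 0 ≤ r := by
      have : a ≤ 1 := haε.trans hεle1
      simp [hr]; linarith
    have hr1 : r < 1 := by simp [hr]; linarith
    set F : ℝ → ℝ := fun θ =>
      ‖f ((r : ℂ) * Complex.exp ((θ : ℂ) * Complex.I))‖ ^ (2:ℕ) with hF
    have hmem : ∀ θ : ℝ, (r : ℂ) * Complex.exp ((θ : ℂ) * Complex.I) ∈ ball (0:ℂ) 1 := by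
      intro θ
      have habs : ‖(r : ℂ) * Complex.exp ((θ : ℂ) * Complex.I)‖ = r := by
        rw [norm_mul, Complex.norm_real, Real.norm_eq_abs, Complex.norm_exp]
        simp [_root_.abs_of_nonneg hr0]
      rw [mem_ball, dist_zero_right, habs]
      exact hr1
    have hFc : Continuous F := by
      have h1 : Continuous fun θ : ℝ => (r : ℂ) * Complex.exp ((θ : ℂ) * Complex.I) :=
        continuous_const.mul (Complex.continuous_exp.comp
          (Complex.continuous_ofReal.mul continuous_const))
      have h2 : Continuous fun θ : ℝ => f ((r : ℂ) * Complex.exp ((θ : ℂ) * Complex.I)) :=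
        hf.comp_continuous h1 hmem
      exact (continuous_norm.comp h2).pow 2
    have hFnn : ∀ θ : ℝ, 0 ≤ F θ := fun θ => by positivity
    -- pointwise lower bound on the arc
    have hptwise : ∀ θ ∈ Set.Icc (φ - a) (φ + a), (K / a) ^ 2 ≤ F θ := by
      intro θ hθ
      set z : ℂ := (r : ℂ) * Complex.exp ((θ : ℂ) * Complex.I) with hz
      have hzlt : ‖z‖ < 1 := by
        have := hmem θ
        rwa [mem_ball, dist_zero_right] at this
      have hchord : ‖Complex.exp ((θ:ℂ) * Complex.I) - α‖ ≤ a := by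
        rw [hαexp]
        have hlip := (lipschitzWith_circleMap (0:ℂ) 1).dist_le_mul θ φ
        simp only [circleMap, zero_add, Complex.ofReal_one, one_mul] at hlip
        rw [Complex.dist_eq] at hlip
        have hθφ : |θ - φ| ≤ a := by
          rw [abs_le]; constructor <;> [linarith [hθ.1]; linarith [hθ.2]]
        calc ‖Complex.exp ((θ:ℂ) * Complex.I) - Complex.exp ((φ:ℂ) * Complex.I)‖
            ≤ (Real.nnabs 1 : ℝ) * dist θ φ := hlip
          _ = dist θ φ := by norm_num
          _ ≤ a := by rw [Real.dist_eq]; exact hθφ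
      have hradial : ‖z - Complex.exp ((θ:ℂ) * Complex.I)‖ = a := by
        have : z - Complex.exp ((θ:ℂ) * Complex.I)
            = ((r : ℂ) - 1) * Complex.exp ((θ:ℂ) * Complex.I) := by rw [hz]; ring
        rw [this, norm_mul, Complex.norm_exp]
        rw [show (((θ:ℂ) * Complex.I).re) = 0 by simp, Real.exp_zero, mul_one]
        have : ((r : ℂ) - 1) = ((r - 1 : ℝ) : ℂ) := by push_cast; ring
        rw [this, Complex.norm_real, Real.norm_eq_abs, abs_of_nonpos (by linarith), hr]
        ring
      have hza : ‖z - α‖ ≤ 2 * a := by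
        calc ‖z - α‖
            ≤ ‖z - Complex.exp ((θ:ℂ) * Complex.I)‖
              + ‖Complex.exp ((θ:ℂ) * Complex.I) - α‖ := by
              have := norm_sub_le_norm_sub_add_norm_sub z (Complex.exp ((θ:ℂ) * Complex.I)) α
              exact this
          _ ≤ a + a := add_le_add (le_of_eq hradial) hchord
          _ = 2 * a := by ring
      have hzρ : ‖z - α‖ ≤ ρ := by
        calc ‖z - α‖ ≤ 2 * a := hza
          _ ≤ 2 * ε := by linarith
          _ ≤ ρ := by linarith
      have hlb := hflow z hzlt hzρ
      have hzαpos : 0 < ‖z - α‖ := by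
        rcases eq_or_lt_of_le (norm_nonneg (z - α)) with h | h
        · exfalso
          have : z = α := by
            have := norm_eq_zero.mp h.symm
            exact sub_eq_zero.mp this
          rw [this, habsα] at hzlt; exact absurd hzlt (lt_irrefl 1)
        · exact h
      have hmono : η / (W * (2 * a)) ≤ η / (W * ‖z - α‖) := by
        apply div_le_div_of_nonneg_left (le_of_lt hηpos) (mul_pos hWpos hzαpos)
        exact mul_le_mul_of_nonneg_left hza (le_of_lt hWpos)
      have hKa : K / a = η / (W * (2 * a)) := by
        rw [hK, div_div]; congr 1; ring
      have hKfz : K / a ≤ ‖f z‖ := by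
        rw [hKa]; exact hmono.trans hlb
      have : (K / a) ^ 2 ≤ ‖f z‖ ^ 2 :=
        pow_le_pow_left₀ (by positivity) hKfz 2
      exact this
    -- integral estimates
    have hπ := Real.pi_gt_three
    have haπ : a ≤ Real.pi := by linarith [haε.trans hεle1]
    have hint : ∀ u v : ℝ, IntervalIntegrable F MeasureTheory.volume u v :=
      fun u v => hFc.intervalIntegrable u v
    have h1 : 2 * K ^ 2 / a ≤ ∫ θ in (φ - a)..(φ + a), F θ := by
      have := intervalIntegral.integral_mono_on (by linarith : φ - a ≤ φ + a)
        (intervalIntegrable_const) (hint _ _) hptwise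
      rw [intervalIntegral.integral_const] at this
      have heq : (φ + a - (φ - a)) • ((K / a) ^ 2) = 2 * K ^ 2 / a := by
        rw [smul_eq_mul]
        field_simp
        ring
      linarith [heq ▸ this]
    have h2 : (∫ θ in (φ - a)..(φ + a), F θ) ≤ ∫ θ in (φ - Real.pi)..(φ + Real.pi), F θ := by
      have i1 : 0 ≤ ∫ θ in (φ - Real.pi)..(φ - a), F θ :=
        intervalIntegral.integral_nonneg (by linarith) (fun x _ => hFnn x)
      have i3 : 0 ≤ ∫ θ in (φ + a)..(φ + Real.pi), F θ :=
        intervalIntegral.integral_nonneg (by linarith) (fun x _ => hFnn x)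
      have s1 := intervalIntegral.integral_add_adjacent_intervals
        (hint (φ - Real.pi) (φ - a)) (hint (φ - a) (φ + a))
      have s2 := intervalIntegral.integral_add_adjacent_intervals
        (hint (φ - Real.pi) (φ + a)) (hint (φ + a) (φ + Real.pi))
      linarith
    have hper : Function.Periodic F (2 * Real.pi) := by
      intro θ
      simp only [hF]
      congr 2
      push_cast
      rw [add_mul, Complex.exp_add]
      rw [show ((2:ℂ) * Real.pi * Complex.I) = 2 * ↑Real.pi * Complex.I by push_cast; ring]
      rw [Complex.exp_two_pi_mul_I, mul_one]
    have h3 : (∫ θ in (φ - Real.pi)..(φ + Real.pi), F θ) = ∫ θ in (0:ℝ)..(2 * Real.pi), F θ := by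
      have := hper.intervalIntegral_add_eq (φ - Real.pi) 0
      rw [zero_add] at this
      rw [show φ - Real.pi + 2 * Real.pi = φ + Real.pi by ring] at this
      exact this
    have h4 : (∫ θ in (0:ℝ)..(2 * Real.pi), F θ) ≤ D := hD r hr0 hr1
    linarith
  -- choose a small enough to contradict
  set a : ℝ := min ε (K ^ 2 / (|D| + 1)) with ha
  have hapos : 0 < a := lt_min hεpos (by positivity)
  have haε : a ≤ ε := min_le_left _ _
  have hcontr := hmain a hapos haε
  have hge : 2 * (|D| + 1) ≤ 2 * K ^ 2 / a := by
    have haK : a ≤ K ^ 2 / (|D| + 1) := min_le_right _ _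
    have hDpos : (0:ℝ) < |D| + 1 := by positivity
    rw [le_div_iff₀ hapos]
    have h := mul_le_mul_of_nonneg_left haK (by positivity : (0:ℝ) ≤ 2 * (|D| + 1))
    have h2 : 2 * (|D| + 1) * (K ^ 2 / (|D| + 1)) = 2 * K ^ 2 := by
      field_simp
    linarith
  have : D < 2 * (|D| + 1) := by
    have := abs_nonneg D
    have := le_abs_self D
    linarith
  linarith

/-- The Szegő kernel `k_λ` is an eigenvector of the Toeplitz-like operator `T_ω`:
if `s·k_λ = q·g + r` on the disc with `g ∈ H²` and `deg r < m`, then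
`g = conj(λ^(m−n) s^♯(λ)/q^♯(λ)) · k_λ`. -/
theorem szego_kernel_eigenvector (s q : Polynomial ℂ)
    (hcop : IsCoprime s q) (hq : q ≠ 0)
    (hqroots : ∀ z : ℂ, q.IsRoot z → ‖z‖ = 1)
    (hprop : s.natDegree ≤ q.natDegree)
    (lam : ℂ) (hlam : ‖lam‖ < 1)
    (g : ℂ → ℂ) (hg : g ∈ HardySpace 2)
    (r : Polynomial ℂ) (hr : r.degree < (q.natDegree : WithBot ℕ))
    (heq : ∀ z : ℂ, ‖z‖ < 1 →
      s.eval z * (1 - (starRingEnd ℂ) lam * z)⁻¹ = q.eval z * g z + r.eval z) :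
    ∀ z : ℂ, ‖z‖ < 1 →
      g z = (starRingEnd ℂ)
          (lam ^ (q.natDegree - s.natDegree) * (sharp s).eval lam / (sharp q).eval lam) *
        (1 - (starRingEnd ℂ) lam * z)⁻¹ := by
  set μ : ℂ := (starRingEnd ℂ) lam with hμdef
  have hμabs : ‖μ‖ < 1 := by rwa [hμdef, Complex.norm_conj]
  have hB : q.reverse.eval μ ≠ 0 := qrev_ne_zero hq hqroots hμabs
  set c : ℂ := (starRingEnd ℂ)
      (lam ^ (q.natDegree - s.natDegree) * (sharp s).eval lam / (sharp q).eval lam) with hc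
  have hcAB : c = (μ ^ (q.natDegree - s.natDegree) * s.reverse.eval μ) / q.reverse.eval μ := by
    rw [hc, map_div₀, map_mul, map_pow, sharp_eval, sharp_eval]
    simp only [← hμdef, RingHom.id_apply]
    rw [starRingEnd_self_apply, starRingEnd_self_apply]
  obtain ⟨rt, hrtdeg, hrteq⟩ := exists_rt s q hq hprop hB (fun p hμ0 => reverse_eval_aux hμ0 p)
  -- the auxiliary function
  set f : ℂ → ℂ := fun z => g z - c * (1 - μ * z)⁻¹ with hf
  have hone : ∀ z : ℂ, ‖z‖ < 1 → (1 - μ * z) ≠ 0 := by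
    intro z hz h0
    have h1 : (1 : ℂ) = μ * z := by linear_combination h0
    have := congrArg (norm (E := ℂ)) h1
    rw [norm_one, norm_mul] at this
    nlinarith [norm_nonneg μ, norm_nonneg z, hμabs, hz]
  have hqne : ∀ z : ℂ, ‖z‖ < 1 → q.eval z ≠ 0 := by
    intro z hz h0
    have := hqroots z h0
    linarith
  -- functional equation for f
  have hfeq : ∀ z : ℂ, ‖z‖ < 1 → q.eval z * f z = (rt - r).eval z := by
    intro z hz
    have h1 := heq z hz
    have h2 := congrArg (Polynomial.eval z) hrteq
    simp only [Polynomial.eval_sub, Polynomial.eval_mul, Polynomial.eval_one,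
      Polynomial.eval_C, Polynomial.eval_X, Polynomial.eval_add] at h2 ⊢
    rw [← hcAB] at h2
    -- h2 : s.eval z - c * q.eval z = (1 - μ * z) * rt.eval z
    have h3 : (1 - μ * z) * (1 - μ * z)⁻¹ = 1 := mul_inv_cancel₀ (hone z hz)
    have h4 : s.eval z * (1 - μ * z)⁻¹ - c * q.eval z * (1 - μ * z)⁻¹
        = rt.eval z := by
      calc s.eval z * (1 - μ * z)⁻¹ - c * q.eval z * (1 - μ * z)⁻¹
          = (s.eval z - c * q.eval z) * (1 - μ * z)⁻¹ := by ring
        _ = (1 - μ * z) * rt.eval z * (1 - μ * z)⁻¹ := by rw [h2]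
        _ = rt.eval z * ((1 - μ * z) * (1 - μ * z)⁻¹) := by ring
        _ = rt.eval z := by rw [h3, mul_one]
    rw [hf]
    rw [h1] at h4
    simp only []
    linear_combination h4
  -- continuity of f on the ball
  obtain ⟨hgdiff, C, hC⟩ := hg
  have hfcont : ContinuousOn f (ball (0:ℂ) 1) := by
    apply ContinuousOn.sub hgdiff.continuousOn
    apply ContinuousOn.mul continuousOn_const
    apply ContinuousOn.inv₀
    · exact (continuous_const.sub (continuous_const.mul continuous_id)).continuousOn
    · intro z hz
      apply hone
      rwa [mem_ball, dist_zero_right] at hz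
  -- the H² bound for f
  have honeabs : ∀ z : ℂ, ‖z‖ < 1 →
      ‖c * (1 - μ * z)⁻¹‖ ≤ ‖c‖ / (1 - ‖μ‖) := by
    intro z hz
    have hlb : 1 - ‖μ‖ ≤ ‖1 - μ * z‖ := by
      have h1 : ‖(1:ℂ)‖ - ‖μ * z‖ ≤ ‖1 - μ * z‖ := by
        have := norm_sub_norm_le (1 : ℂ) (μ * z)
        simpa using this
      rw [norm_one, norm_mul] at h1
      nlinarith [norm_nonneg μ, norm_nonneg z, hμabs, hz]
    rw [norm_mul, norm_inv, div_eq_mul_inv]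
    apply mul_le_mul_of_nonneg_left _ (norm_nonneg c)
    apply inv_anti₀ (by linarith) hlb
  set M : ℝ := ‖c‖ / (1 - ‖μ‖) with hM
  have hMnn : 0 ≤ M := by
    rw [hM]
    exact div_nonneg (norm_nonneg c) (by linarith)
  -- convert the rpow bound to a ℕ-pow bound
  have hC' : ∀ ρ : ℝ, 0 ≤ ρ → ρ < 1 →
      (∫ θ in (0:ℝ)..(2 * Real.pi),
        ‖g ((ρ : ℂ) * Complex.exp (θ * Complex.I))‖ ^ (2:ℕ)) ≤ C := by
    intro ρ h0 h1
    have := hC ρ h0 h1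
    have hconv : ∀ x : ℝ, x ^ ((2:ℝ)) = x ^ (2:ℕ) := by
      intro x
      rw [show ((2:ℝ)) = ((2:ℕ):ℝ) by norm_num, Real.rpow_natCast]
    calc (∫ θ in (0:ℝ)..(2 * Real.pi),
          ‖g ((ρ : ℂ) * Complex.exp (θ * Complex.I))‖ ^ (2:ℕ))
        = ∫ θ in (0:ℝ)..(2 * Real.pi),
          ‖g ((ρ : ℂ) * Complex.exp (θ * Complex.I))‖ ^ ((2:ℝ)) := by
          apply intervalIntegral.integral_congr
          intro θ _
          exact (hconv _).symm
      _ ≤ C := this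
  set D : ℝ := 2 * C + 2 * M ^ 2 * (2 * Real.pi) with hD
  have hbound : ∀ ρ : ℝ, 0 ≤ ρ → ρ < 1 →
      (∫ θ in (0:ℝ)..(2 * Real.pi),
        ‖f ((ρ : ℂ) * Complex.exp (θ * Complex.I))‖ ^ (2:ℕ)) ≤ D := by
    intro ρ h0 h1
    have hmem : ∀ θ : ℝ, ‖(ρ : ℂ) * Complex.exp ((θ:ℂ) * Complex.I)‖ < 1 := by
      intro θ
      rw [norm_mul, Complex.norm_exp]
      rw [show (((θ:ℂ) * Complex.I).re) = 0 by simp, Real.exp_zero, mul_one,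
        Complex.norm_real, Real.norm_eq_abs, _root_.abs_of_nonneg h0]
      exact h1
    have hcg : Continuous fun θ : ℝ => g ((ρ : ℂ) * Complex.exp ((θ:ℂ) * Complex.I)) := by
      apply hgdiff.continuousOn.comp_continuous
        (continuous_const.mul (Complex.continuous_exp.comp
          (Complex.continuous_ofReal.mul continuous_const)))
      intro θ
      rw [mem_ball, dist_zero_right]
      exact hmem θ
    have hcf : Continuous fun θ : ℝ => f ((ρ : ℂ) * Complex.exp ((θ:ℂ) * Complex.I)) := by
      apply hfcont.comp_continuous
        (continuous_const.mul (Complex.continuous_exp.comp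
          (Complex.continuous_ofReal.mul continuous_const)))
      intro θ
      rw [mem_ball, dist_zero_right]
      exact hmem θ
    have hptwise : ∀ θ ∈ Set.Icc (0:ℝ) (2 * Real.pi),
        ‖f ((ρ : ℂ) * Complex.exp ((θ:ℂ) * Complex.I))‖ ^ (2:ℕ)
          ≤ 2 * ‖g ((ρ : ℂ) * Complex.exp ((θ:ℂ) * Complex.I))‖ ^ (2:ℕ)
            + 2 * M ^ 2 := by
      intro θ _
      set z : ℂ := (ρ : ℂ) * Complex.exp ((θ:ℂ) * Complex.I) with hzdef
      have hzlt : ‖z‖ < 1 := hmem θ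
      have htri : ‖f z‖ ≤ ‖g z‖ + M := by
        rw [hf]
        calc ‖g z - c * (1 - μ * z)⁻¹‖
            ≤ ‖g z‖ + ‖c * (1 - μ * z)⁻¹‖ := by
              have := norm_sub_le (g z) (c * (1 - μ * z)⁻¹)
              simpa using this
          _ ≤ ‖g z‖ + M := by
              have := honeabs z hzlt
              linarith
      have hsq : ‖f z‖ ^ 2 ≤ (‖g z‖ + M) ^ 2 :=
        pow_le_pow_left₀ (norm_nonneg _) htri 2
      nlinarith [hsq, sq_nonneg (‖g z‖ - M)]
    have hint1 : IntervalIntegrable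
        (fun θ : ℝ => ‖f ((ρ : ℂ) * Complex.exp ((θ:ℂ) * Complex.I))‖ ^ (2:ℕ))
        MeasureTheory.volume 0 (2 * Real.pi) :=
      ((continuous_norm.comp hcf).pow 2).intervalIntegrable _ _
    have hint2 : IntervalIntegrable
        (fun θ : ℝ => 2 * ‖g ((ρ : ℂ) * Complex.exp ((θ:ℂ) * Complex.I))‖ ^ (2:ℕ)
          + 2 * M ^ 2) MeasureTheory.volume 0 (2 * Real.pi) := by
      apply IntervalIntegrable.add _ intervalIntegrable_const
      exact (continuous_const.mul ((continuous_norm.comp hcg).pow 2)).intervalIntegrable _ _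
    have hintg : IntervalIntegrable
        (fun θ : ℝ => ‖g ((ρ : ℂ) * Complex.exp ((θ:ℂ) * Complex.I))‖ ^ (2:ℕ))
        MeasureTheory.volume 0 (2 * Real.pi) :=
      ((continuous_norm.comp hcg).pow 2).intervalIntegrable _ _
    have hπ := Real.pi_pos
    have step1 := intervalIntegral.integral_mono_on (by linarith) hint1 hint2 hptwise
    have step2 : (∫ θ in (0:ℝ)..(2 * Real.pi),
        (2 * ‖g ((ρ : ℂ) * Complex.exp ((θ:ℂ) * Complex.I))‖ ^ (2:ℕ)
          + 2 * M ^ 2)) = 2 * (∫ θ in (0:ℝ)..(2 * Real.pi),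
            ‖g ((ρ : ℂ) * Complex.exp ((θ:ℂ) * Complex.I))‖ ^ (2:ℕ))
          + 2 * M ^ 2 * (2 * Real.pi) := by
      rw [intervalIntegral.integral_add (hintg.const_mul 2) intervalIntegrable_const,
        intervalIntegral.integral_const_mul, intervalIntegral.integral_const]
      simp [smul_eq_mul]
      ring
    have := hC' ρ h0 h1
    rw [step2] at step1
    calc (∫ θ in (0:ℝ)..(2 * Real.pi),
          ‖f ((ρ : ℂ) * Complex.exp (θ * Complex.I))‖ ^ (2:ℕ))
        ≤ 2 * (∫ θ in (0:ℝ)..(2 * Real.pi),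
            ‖g ((ρ : ℂ) * Complex.exp ((θ:ℂ) * Complex.I))‖ ^ (2:ℕ))
          + 2 * M ^ 2 * (2 * Real.pi) := step1
      _ ≤ 2 * C + 2 * M ^ 2 * (2 * Real.pi) := by linarith
      _ = D := by rw [hD]
  -- apply the key analytic lemma
  have hdegsub : (rt - r).degree < q.degree := by
    rw [Polynomial.degree_eq_natDegree hq]
    exact lt_of_le_of_lt (Polynomial.degree_sub_le _ _) (max_lt hrtdeg hr)
  have hzero : rt - r = 0 := key_analytic q hq hqroots f hfcont D hbound (rt - r) hdegsub hfeq
  -- conclude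
  intro z hz
  have h1 := hfeq z hz
  rw [hzero] at h1
  simp only [Polynomial.eval_zero] at h1
  have h2 : f z = 0 := by
    rcases mul_eq_zero.mp h1 with h | h
    · exact absurd h (hqne z hz)
    · exact h
  have : g z - c * (1 - μ * z)⁻¹ = 0 := h2
  rw [hc] at this
  linear_combination this
end

section
/- Let ω̃ = s̃/q̃ with s̃, q̃ coprime polynomials and all roots of q̃ on the unit circle. Then { f ∈ H² : ω̃·f ∈ H² } = q̃·H². (Here ω̃·f is the function z ↦ s̃(z)f(z)/q̃(z) on the open unit disc.) -/
open Polynomial Metric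

private lemma rp2 (x : ℝ) : x ^ (2:ℝ) = x ^ 2 := by
  rw [show (2:ℝ) = ((2:ℕ):ℝ) by norm_num, Real.rpow_natCast]

private lemma hs2_point_mem {r θ : ℝ} (hr0 : 0 ≤ r) (hr1 : r < 1) :
    ((r:ℂ) * Complex.exp (θ * Complex.I)) ∈ ball (0:ℂ) 1 := by
  rw [mem_ball_zero_iff]
  simpa [norm_mul, Complex.norm_exp_ofReal_mul_I,
    Complex.norm_real, Real.norm_eq_abs, abs_of_nonneg hr0] using hr1

private lemma hs2_cont {f : ℂ → ℂ} (hf : DifferentiableOn ℂ f (ball (0:ℂ) 1))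
    {r : ℝ} (hr0 : 0 ≤ r) (hr1 : r < 1) :
    Continuous (fun θ : ℝ => f ((r:ℂ) * Complex.exp (θ * Complex.I))) := by
  apply hf.continuousOn.comp_continuous
  · fun_prop
  · exact fun θ => hs2_point_mem hr0 hr1

private lemma hs2_intg {f : ℂ → ℂ} (hf : DifferentiableOn ℂ f (ball (0:ℂ) 1))
    {r : ℝ} (hr0 : 0 ≤ r) (hr1 : r < 1) :
    IntervalIntegrable
      (fun θ : ℝ => ‖f ((r:ℂ) * Complex.exp (θ * Complex.I))‖ ^ (2:ℝ))
      MeasureTheory.volume 0 (2 * Real.pi) := by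
  have : Continuous (fun θ : ℝ =>
      ‖f ((r:ℂ) * Complex.exp (θ * Complex.I))‖ ^ (2:ℝ)) := by
    simp only [rp2]
    exact (continuous_norm.comp (hs2_cont hf hr0 hr1)).pow 2
  exact this.intervalIntegrable _ _

private lemma hs2_congr {f g : ℂ → ℂ} (hf : f ∈ HardySpace 2)
    (hfg : ∀ z ∈ ball (0:ℂ) 1, g z = f z) : g ∈ HardySpace 2 := by
  obtain ⟨hd, C, hC⟩ := hf
  refine ⟨hd.congr hfg, C, fun r hr0 hr1 => ?_⟩
  have : (∫ θ in (0:ℝ)..(2 * Real.pi),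
        ‖g ((r : ℂ) * Complex.exp (θ * Complex.I))‖ ^ (2:ℝ)) =
      (∫ θ in (0:ℝ)..(2 * Real.pi),
        ‖f ((r : ℂ) * Complex.exp (θ * Complex.I))‖ ^ (2:ℝ)) := by
    apply intervalIntegral.integral_congr
    intro θ _
    dsimp only
    rw [hfg _ (hs2_point_mem hr0 hr1)]
  rw [this]; exact hC r hr0 hr1

private lemma hs2_polymul (p : Polynomial ℂ) {f : ℂ → ℂ} (hf : f ∈ HardySpace 2) :
    (fun z => p.eval z * f z) ∈ HardySpace 2 := by
  obtain ⟨hd, C, hC⟩ := hf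
  obtain ⟨M, hM⟩ := (isCompact_closedBall (0:ℂ) 1).exists_bound_of_continuousOn
    (p.continuous).continuousOn
  set M' := max M 0 with hM'
  have hM'0 : 0 ≤ M' := le_max_right _ _
  have hCge : 0 ≤ C := by
    have h0 := hC 0 le_rfl one_pos
    refine le_trans ?_ h0
    apply intervalIntegral.integral_nonneg Real.two_pi_pos.le
    intro θ _; positivity
  refine ⟨(p.differentiable.differentiableOn).mul hd, M' ^ 2 * C, fun r hr0 hr1 => ?_⟩
  have hd' : DifferentiableOn ℂ (fun z => p.eval z * f z) (ball (0:ℂ) 1) :=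
    (p.differentiable.differentiableOn).mul hd
  have key : (∫ θ in (0:ℝ)..(2 * Real.pi),
        ‖(fun z => p.eval z * f z)
          ((r : ℂ) * Complex.exp (θ * Complex.I))‖ ^ (2:ℝ)) ≤
      ∫ θ in (0:ℝ)..(2 * Real.pi),
        M' ^ 2 * ‖f ((r : ℂ) * Complex.exp (θ * Complex.I))‖ ^ (2:ℝ) := by
    apply intervalIntegral.integral_mono_on Real.two_pi_pos.le
      (hs2_intg hd' hr0 hr1)
      (((hs2_intg hd hr0 hr1)).const_mul _)
    intro θ _
    set w := (r:ℂ) * Complex.exp (θ * Complex.I) with hw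
    have hwm : w ∈ closedBall (0:ℂ) 1 := ball_subset_closedBall (hs2_point_mem hr0 hr1)
    have hb : ‖p.eval w‖ ≤ M' := by
      have h := hM w hwm
      exact le_trans h (le_max_left _ _)
    simp only [rp2, norm_mul]
    have h1 : ‖p.eval w‖ * ‖f w‖ ≤ M' * ‖f w‖ :=
      mul_le_mul_of_nonneg_right hb (norm_nonneg _)
    calc (‖p.eval w‖ * ‖f w‖) ^ 2
        ≤ (M' * ‖f w‖) ^ 2 :=
          pow_le_pow_left₀ (mul_nonneg (norm_nonneg _) (norm_nonneg _)) h1 2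
      _ = M' ^ 2 * ‖f w‖ ^ 2 := mul_pow _ _ _
  calc (∫ θ in (0:ℝ)..(2 * Real.pi),
        ‖(fun z => p.eval z * f z)
          ((r : ℂ) * Complex.exp (θ * Complex.I))‖ ^ (2:ℝ)) ≤
      ∫ θ in (0:ℝ)..(2 * Real.pi),
        M' ^ 2 * ‖f ((r : ℂ) * Complex.exp (θ * Complex.I))‖ ^ (2:ℝ) := key
    _ = M' ^ 2 * ∫ θ in (0:ℝ)..(2 * Real.pi),
        ‖f ((r : ℂ) * Complex.exp (θ * Complex.I))‖ ^ (2:ℝ) :=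
      intervalIntegral.integral_const_mul _ _
    _ ≤ M' ^ 2 * C := mul_le_mul_of_nonneg_left (hC r hr0 hr1) (by positivity)

private lemma hs2_add {f g : ℂ → ℂ} (hf : f ∈ HardySpace 2) (hg : g ∈ HardySpace 2) :
    (fun z => f z + g z) ∈ HardySpace 2 := by
  obtain ⟨hdf, C1, hC1⟩ := hf
  obtain ⟨hdg, C2, hC2⟩ := hg
  refine ⟨hdf.add hdg, 2 * C1 + 2 * C2, fun r hr0 hr1 => ?_⟩
  have hd' : DifferentiableOn ℂ (fun z => f z + g z) (ball (0:ℂ) 1) := hdf.add hdg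
  have key : (∫ θ in (0:ℝ)..(2 * Real.pi),
        ‖(fun z => f z + g z)
          ((r : ℂ) * Complex.exp (θ * Complex.I))‖ ^ (2:ℝ)) ≤
      ∫ θ in (0:ℝ)..(2 * Real.pi),
        (2 * ‖f ((r : ℂ) * Complex.exp (θ * Complex.I))‖ ^ (2:ℝ) +
         2 * ‖g ((r : ℂ) * Complex.exp (θ * Complex.I))‖ ^ (2:ℝ)) := by
    apply intervalIntegral.integral_mono_on Real.two_pi_pos.le
      (hs2_intg hd' hr0 hr1)
      (((hs2_intg hdf hr0 hr1).const_mul 2).add ((hs2_intg hdg hr0 hr1).const_mul 2))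
    intro θ _
    set w := (r:ℂ) * Complex.exp (θ * Complex.I) with hw
    have htri : ‖f w + g w‖ ≤ ‖f w‖ + ‖g w‖ :=
      norm_add_le _ _
    simp only [rp2]
    nlinarith [norm_nonneg (f w), norm_nonneg (g w),
      norm_nonneg (f w + g w), sq_nonneg (‖f w‖ - ‖g w‖)]
  calc (∫ θ in (0:ℝ)..(2 * Real.pi),
        ‖(fun z => f z + g z)
          ((r : ℂ) * Complex.exp (θ * Complex.I))‖ ^ (2:ℝ)) ≤ _ := key
    _ = (∫ θ in (0:ℝ)..(2 * Real.pi),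
          2 * ‖f ((r : ℂ) * Complex.exp (θ * Complex.I))‖ ^ (2:ℝ)) +
        (∫ θ in (0:ℝ)..(2 * Real.pi),
          2 * ‖g ((r : ℂ) * Complex.exp (θ * Complex.I))‖ ^ (2:ℝ)) :=
      intervalIntegral.integral_add ((hs2_intg hdf hr0 hr1).const_mul 2)
        ((hs2_intg hdg hr0 hr1).const_mul 2)
    _ = 2 * (∫ θ in (0:ℝ)..(2 * Real.pi),
          ‖f ((r : ℂ) * Complex.exp (θ * Complex.I))‖ ^ (2:ℝ)) +
        2 * (∫ θ in (0:ℝ)..(2 * Real.pi),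
          ‖g ((r : ℂ) * Complex.exp (θ * Complex.I))‖ ^ (2:ℝ)) := by
      rw [intervalIntegral.integral_const_mul, intervalIntegral.integral_const_mul]
    _ ≤ 2 * C1 + 2 * C2 := by
      have h1 := hC1 r hr0 hr1
      have h2 := hC2 r hr0 hr1
      linarith

/-- For `ω̃ = s̃/q̃` with `s̃, q̃` coprime and all roots of `q̃` on the unit circle,
`{f ∈ H² : ω̃ f ∈ H²} = q̃ H²` (as functions on the open unit disc). -/
theorem domain_sarason_toeplitz (st qt : Polynomial ℂ)
    (hcop : IsCoprime st qt) (hqt : qt ≠ 0)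
    (hroots : ∀ z : ℂ, qt.IsRoot z → ‖z‖ = 1) :
    {f : ℂ → ℂ | f ∈ HardySpace 2 ∧
        (fun z => st.eval z * f z / qt.eval z) ∈ HardySpace 2} =
    {g : ℂ → ℂ | ∃ h ∈ HardySpace 2,
        ∀ z : ℂ, ‖z‖ < 1 → g z = qt.eval z * h z} := by
  have hq0 : ∀ z : ℂ, ‖z‖ < 1 → qt.eval z ≠ 0 := by
    intro z hz hroot
    have := hroots z hroot
    linarith [this ▸ hz]
  have hball : ∀ z : ℂ, z ∈ ball (0:ℂ) 1 → ‖z‖ < 1 := by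
    intro z hz
    simpa using mem_ball_zero_iff.mp hz
  ext f
  simp only [Set.mem_setOf_eq]
  constructor
  · rintro ⟨hf, hsf⟩
    obtain ⟨a, b, hab⟩ := hcop
    refine ⟨fun z => a.eval z * (st.eval z * f z / qt.eval z) + b.eval z * f z,
      hs2_add (hs2_polymul a hsf) (hs2_polymul b hf), ?_⟩
    intro z hz
    have hq : qt.eval z ≠ 0 := hq0 z hz
    have he : a.eval z * st.eval z + b.eval z * qt.eval z = 1 := by
      have := congrArg (Polynomial.eval z) hab
      simpa using this
    have h1 : qt.eval z * (a.eval z * (st.eval z * f z / qt.eval z) + b.eval z * f z)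
        = (a.eval z * st.eval z + b.eval z * qt.eval z) * f z := by
      field_simp
    rw [h1, he, one_mul]
  · rintro ⟨h, hh, hgh⟩
    constructor
    · exact hs2_congr (hs2_polymul qt hh) (fun z hz => hgh z (hball z hz))
    · apply hs2_congr (hs2_polymul st hh)
      intro z hz
      have hq : qt.eval z ≠ 0 := hq0 z (hball z hz)
      rw [hgh z (hball z hz)]
      field_simp
end

section
/- Let ω = s/q with s, q coprime polynomials of degrees n and m respectively, all roots of q on the unit circle, and let f be analytic on an open neighborhood of the closed unit disc. Then there exist h ∈ H² (in fact, h analytic on a neighborhood of the closed disc) and a polynomial r with deg(r) < m such that s·f = q·h + r. -/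
open Polynomial Metric

lemma poly_div_aux (U : Set ℂ) (hU : IsOpen U) :
    ∀ n : ℕ, ∀ q : Polynomial ℂ, q.natDegree = n → q ≠ 0 →
      (∀ z, q.IsRoot z → z ∈ U) →
      ∀ g : ℂ → ℂ, DifferentiableOn ℂ g U →
      ∃ h : ℂ → ℂ, DifferentiableOn ℂ h U ∧ ∃ r : Polynomial ℂ,
        r.degree < (q.natDegree : WithBot ℕ) ∧
        ∀ z ∈ U, g z = q.eval z * h z + r.eval z := by
  intro n
  induction n with
  | zero =>
    intro q hqn hq0 _ g hg
    have hc : q = C (q.coeff 0) := q.eq_C_of_natDegree_eq_zero hqn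
    have hc0 : q.coeff 0 ≠ 0 := by
      intro h; apply hq0; rw [hc, h, map_zero]
    refine ⟨fun z => g z / q.coeff 0, hg.div_const _, 0, ?_, ?_⟩
    · rw [hqn, degree_zero]
      exact_mod_cast WithBot.bot_lt_coe 0
    · intro z _
      rw [hc]
      simp only [eval_C, eval_zero, add_zero, coeff_C_zero]
      field_simp
  | succ n ih =>
    intro q hqn hq0 hroots g hg
    have hdeg : 0 < q.degree := by
      rw [degree_eq_natDegree hq0, hqn]; exact_mod_cast Nat.succ_pos n
    obtain ⟨z₀, hz₀⟩ := Complex.exists_root hdeg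
    have hz₀U : z₀ ∈ U := hroots z₀ hz₀
    obtain ⟨q₁, hfac⟩ := dvd_iff_isRoot.mpr hz₀
    have hq₁0 : q₁ ≠ 0 := by
      rintro rfl; exact hq0 (by rw [hfac, mul_zero])
    have hq₁n : q₁.natDegree = n := by
      have h2 := natDegree_mul (X_sub_C_ne_zero z₀) hq₁0
      rw [← hfac, natDegree_X_sub_C, hqn] at h2
      omega
    have hroots₁ : ∀ z, q₁.IsRoot z → z ∈ U := by
      intro z hz
      apply hroots
      rw [IsRoot, hfac, eval_mul, hz, mul_zero]
    obtain ⟨h₁, hh₁, r₁, hr₁d, hr₁⟩ := ih q₁ hq₁n hq₁0 hroots₁ g hg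
    have hdsl : DifferentiableOn ℂ (dslope h₁ z₀) U := by
      intro x hx
      rcases eq_or_ne x z₀ with rfl | hne
      · obtain ⟨p, hp⟩ := hh₁.analyticAt (hU.mem_nhds hx)
        exact hp.has_fpower_series_dslope_fslope.analyticAt.differentiableAt.differentiableWithinAt
      · exact (differentiableWithinAt_dslope_of_ne hne).mpr (hh₁ x hx)
    refine ⟨dslope h₁ z₀, hdsl, C (h₁ z₀) * q₁ + r₁, ?_, ?_⟩
    · have h1 : (C (h₁ z₀) * q₁).degree ≤ (n : WithBot ℕ) := by
        refine (degree_mul_le _ _).trans ?_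
        have hb : q₁.degree ≤ (n : WithBot ℕ) := by
          rw [← hq₁n]; exact degree_le_natDegree
        calc (C (h₁ z₀)).degree + q₁.degree ≤ 0 + (n : WithBot ℕ) :=
              add_le_add degree_C_le hb
          _ = (n : WithBot ℕ) := zero_add _
      have hlt : (n : WithBot ℕ) < (q.natDegree : WithBot ℕ) := by
        rw [hqn]; exact_mod_cast Nat.lt_succ_self n
      refine (degree_add_le _ _).trans_lt (max_lt (h1.trans_lt hlt) ?_)
      rw [hq₁n] at hr₁d
      exact hr₁d.trans hlt
    · intro z hz
      have hd := sub_smul_dslope h₁ z₀ z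
      rw [smul_eq_mul] at hd
      have heq := hr₁ z hz
      simp only [hfac, eval_add, eval_mul, eval_sub, eval_X, eval_C]
      linear_combination heq - q₁.eval z * hd

/-- Functions analytic on a neighborhood of the closed disc lie in `Dom(T_ω)`:
if `f` is analytic on a neighborhood of the closed unit disc, then there are `h ∈ H²`
(analytic on a neighborhood of the closed disc) and a polynomial `r` with `deg r < deg q`
such that `s f = q h + r` on the open disc. -/
theorem analytic_in_domain (s q : Polynomial ℂ) (hcop : IsCoprime s q) (hq : q ≠ 0)
    (hroots : ∀ z : ℂ, q.IsRoot z → ‖z‖ = 1)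
    (f : ℂ → ℂ) (U : Set ℂ) (hU : IsOpen U)
    (hUsub : closedBall (0 : ℂ) 1 ⊆ U) (hf : DifferentiableOn ℂ f U) :
    ∃ h : ℂ → ℂ, ∃ V : Set ℂ, IsOpen V ∧ closedBall (0 : ℂ) 1 ⊆ V ∧
      DifferentiableOn ℂ h V ∧ h ∈ HardySpace 2 ∧
      ∃ r : Polynomial ℂ, r.degree < (q.natDegree : WithBot ℕ) ∧
        ∀ z : ℂ, ‖z‖ < 1 →
          s.eval z * f z = q.eval z * h z + r.eval z := by
  have hrootsU : ∀ z, q.IsRoot z → z ∈ U := fun z hz =>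
    hUsub (mem_closedBall_zero_iff.mpr (by rw [hroots z hz]))
  have hg : DifferentiableOn ℂ (fun z => s.eval z * f z) U :=
    (s.differentiable.differentiableOn).mul hf
  obtain ⟨h, hh, r, hrd, hr⟩ := poly_div_aux U hU q.natDegree q rfl hq hrootsU _ hg
  have hball : ball (0:ℂ) 1 ⊆ U := ball_subset_closedBall.trans hUsub
  obtain ⟨w₀, hw₀, hM⟩ := (isCompact_closedBall (0:ℂ) 1).exists_isMaxOn
    ⟨0, by simp⟩ (continuous_norm.comp_continuousOn (hh.continuousOn.mono hUsub))
  set M := ‖h w₀‖ with hMdef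
  refine ⟨h, U, hU, hUsub, hh, ⟨hh.mono hball, 2 * Real.pi * M ^ 2, ?_⟩, r, hrd,
    fun z hz => hr z (hball (mem_ball_zero_iff.mpr hz))⟩
  intro ρ hρ0 hρ1
  have habs : ∀ θ : ℝ, ‖(ρ:ℂ) * Complex.exp (θ * Complex.I)‖ = ρ := by
    intro θ
    rw [norm_mul, Complex.norm_exp_ofReal_mul_I, mul_one, Complex.norm_real,
      Real.norm_of_nonneg hρ0]
  have hmem : ∀ θ : ℝ, (ρ:ℂ) * Complex.exp (θ * Complex.I) ∈ closedBall (0:ℂ) 1 :=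
    fun θ => mem_closedBall_zero_iff.mpr (by rw [habs θ]; linarith)
  have hcont : Continuous fun θ : ℝ => h ((ρ:ℂ) * Complex.exp (θ * Complex.I)) := by
    refine (hh.continuousOn.mono hUsub).comp_continuous ?_ hmem
    fun_prop
  have hpow : ∀ x : ℝ, x ^ (2:ℝ) = x ^ 2 := fun x => by
    rw [show (2:ℝ) = ((2:ℕ):ℝ) by norm_num, Real.rpow_natCast]
  have hintcont : Continuous fun θ : ℝ =>
      ‖h ((ρ:ℂ) * Complex.exp (θ * Complex.I))‖ ^ (2:ℝ) := by
    simp only [hpow]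
    exact (continuous_norm.comp hcont).pow 2
  have hpi : (0:ℝ) ≤ 2 * Real.pi := by positivity
  calc (∫ θ in (0:ℝ)..(2 * Real.pi),
        ‖h ((ρ:ℂ) * Complex.exp (θ * Complex.I))‖ ^ (2:ℝ))
      ≤ ∫ _ in (0:ℝ)..(2 * Real.pi), M ^ 2 := by
        refine intervalIntegral.integral_mono_on hpi
          (hintcont.intervalIntegrable _ _) (intervalIntegrable_const) ?_
        intro θ _
        rw [hpow]
        exact pow_le_pow_left₀ (norm_nonneg _) (hM (hmem θ)) 2
    _ = 2 * Real.pi * M ^ 2 := by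
        rw [intervalIntegral.integral_const, smul_eq_mul, sub_zero]
end

section
/- Let s, q be coprime polynomials with all roots of q on the unit circle, deg(q) = m, and suppose s(z)/q(z) is real for all unimodular z not a root of q, with s/q not constant. If deg(q) is odd, then (s/q)(T) = ℝ, i.e., for every t ∈ ℝ there exists z on the unit circle with q(z) ≠ 0 and s(z)/q(z) = t. -/
open Polynomial Complex

lemma factor_single (θ α : ℝ) :
    Complex.exp (θ * I) - Complex.exp (α * I)
      = 2 * I * Complex.exp ((((θ + α) / 2 : ℝ)) * I) * ((Real.sin ((θ - α) / 2) : ℝ) : ℂ) := by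
  have h1 : (θ:ℂ) * I = (((θ+α)/2 : ℝ):ℂ) * I + (((θ-α)/2 : ℝ):ℂ) * I := by push_cast; ring
  have h2 : (α:ℂ) * I = (((θ+α)/2 : ℝ):ℂ) * I - (((θ-α)/2 : ℝ):ℂ) * I := by push_cast; ring
  rw [h1, h2, Complex.exp_add, Complex.exp_sub, Complex.ofReal_sin]
  rw [Complex.sin, neg_mul, Complex.exp_neg]
  field_simp
  ring_nf
  simp [Complex.I_sq]

lemma prod_formula (θ : ℝ) (M : Multiset ℂ) (h : ∀ w ∈ M, ‖w‖ = 1) :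
    (M.map (fun w => Complex.exp ((θ:ℂ) * I) - w)).prod
      = (2*I) ^ (Multiset.card M)
        * Complex.exp (((((Multiset.card M : ℝ) * θ + (M.map Complex.arg).sum) / 2 : ℝ)) * I)
        * (((M.map (fun w => Real.sin ((θ - Complex.arg w) / 2))).prod : ℝ) : ℂ) := by
  induction M using Multiset.induction with
  | empty => simp
  | cons w M ih =>
    have hw : ‖w‖ = 1 := h w (Multiset.mem_cons_self w M)
    have hW : w = Complex.exp ((Complex.arg w : ℂ) * I) := by
      conv_lhs => rw [← Complex.norm_mul_exp_arg_mul_I w]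
      rw [hw]; simp
    have ih' := ih (fun x hx => h x (Multiset.mem_cons_of_mem hx))
    simp only [Multiset.map_cons, Multiset.prod_cons, Multiset.sum_cons, Multiset.card_cons]
    rw [show ((((Multiset.card M + 1 : ℕ) : ℝ) * θ + (Complex.arg w + (M.map Complex.arg).sum)) / 2 : ℝ)
        = ((θ + Complex.arg w)/2) + (((Multiset.card M : ℕ):ℝ) * θ + (M.map Complex.arg).sum)/2 from by
      push_cast; ring]
    rw [Complex.ofReal_add, add_mul, Complex.exp_add, Complex.ofReal_mul, pow_succ]
    conv_lhs => rw [hW, factor_single θ (Complex.arg w), ih']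
    ring

lemma aux_contradiction (q g : Polynomial ℂ) (hq : q ≠ 0)
    (habs : ∀ w ∈ q.roots, ‖w‖ = 1)
    (hodd : Odd q.natDegree)
    (hgz : ∀ z : ℂ, ‖z‖ = 1 → g.eval z ≠ 0)
    (hre : ∀ z : ℂ, ‖z‖ = 1 → (q.eval z / g.eval z).im = 0) : False := by
  classical
  have hsplits : q.Splits := IsAlgClosed.splits q
  have hfact : q = C q.leadingCoeff * (q.roots.map (fun a => X - C a)).prod :=
    hsplits.eq_prod_roots
  have hcard : Multiset.card q.roots = q.natDegree := splits_iff_card_roots.mp hsplits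
  set m := q.natDegree with hm
  set A : ℝ := (q.roots.map Complex.arg).sum with hA
  set S : ℝ → ℝ := fun θ => (q.roots.map (fun w => Real.sin ((θ - Complex.arg w) / 2))).prod with hS
  set u : ℝ → ℂ := fun θ =>
      (q.leadingCoeff * ((2*I)^m * Complex.exp ((((m:ℝ)*θ + A)/2 : ℝ) * I)))
        / g.eval (Complex.exp ((θ:ℂ) * I)) with hu
  have hz1 : ∀ θ:ℝ, ‖Complex.exp ((θ:ℂ)*I)‖ = 1 := Complex.norm_exp_ofReal_mul_I
  have hgz' : ∀ θ:ℝ, g.eval (Complex.exp ((θ:ℂ)*I)) ≠ 0 := fun θ => hgz _ (hz1 θ)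
  have heval : ∀ θ : ℝ, q.eval (Complex.exp ((θ:ℂ) * I))
      = (q.leadingCoeff * ((2*I)^m * Complex.exp ((((m:ℝ)*θ + A)/2 : ℝ) * I))) * ((S θ : ℝ) : ℂ) := by
    intro θ
    conv_lhs => rw [hfact]
    rw [eval_mul, eval_C, eval_multiset_prod, Multiset.map_map]
    simp only [Function.comp, eval_sub, eval_X, eval_C]
    rw [prod_formula θ q.roots habs, hcard]
    simp only [hS, hA, hm]
    ring
  have hu0 : ∀ θ, u θ ≠ 0 := by
    intro θ
    rw [hu]
    exact div_ne_zero (mul_ne_zero (leadingCoeff_ne_zero.mpr hq)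
      (mul_ne_zero (pow_ne_zero _ (mul_ne_zero two_ne_zero I_ne_zero)) (Complex.exp_ne_zero _)))
      (hgz' θ)
  have hucont : Continuous u := by
    rw [hu]
    apply Continuous.div
    · apply continuous_const.mul
      apply continuous_const.mul
      exact Complex.continuous_exp.comp ((Complex.continuous_ofReal.comp (by fun_prop)).mul continuous_const)
    · exact (Polynomial.continuous g).comp
        (Complex.continuous_exp.comp (Complex.continuous_ofReal.mul continuous_const))
    · exact hgz'
  have hrel : ∀ θ : ℝ, q.eval (Complex.exp ((θ:ℂ)*I)) / g.eval (Complex.exp ((θ:ℂ)*I))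
      = ((S θ : ℝ) : ℂ) * u θ := by
    intro θ
    rw [heval θ, hu]
    ring
  have him0 : ∀ θ : ℝ, S θ ≠ 0 → (u θ).im = 0 := by
    intro θ hSθ
    have h1 := hre _ (hz1 θ)
    rw [hrel θ] at h1
    simp only [Complex.mul_im, Complex.ofReal_re, Complex.ofReal_im, zero_mul, add_zero] at h1
    rcases mul_eq_zero.mp h1 with h | h
    · exact absurd h hSθ
    · exact h
  have hZ : {θ : ℝ | S θ = 0}.Countable := by
    have hsub : {θ : ℝ | S θ = 0} ⊆
        ⋃ w ∈ q.roots.toFinset, ⋃ n : ℤ, {(2 * ((n:ℝ) * Real.pi) + Complex.arg w)} := by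
      intro θ hθ
      simp only [Set.mem_setOf_eq, hS] at hθ
      have h0 : (0:ℝ) ∈ q.roots.map (fun w => Real.sin ((θ - Complex.arg w) / 2)) :=
        Multiset.prod_eq_zero_iff.mp hθ
      obtain ⟨w, hw, hw0⟩ := Multiset.mem_map.mp h0
      obtain ⟨n, hn⟩ := Real.sin_eq_zero_iff.mp hw0
      simp only [Set.mem_iUnion, Set.mem_singleton_iff]
      exact ⟨w, Multiset.mem_toFinset.mpr hw, n, by linarith⟩
    exact Set.Countable.mono hsub
      (Set.Countable.biUnion q.roots.toFinset.countable_toSet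
        (fun w _ => Set.countable_iUnion (fun n => Set.countable_singleton _)))
  have hdense : Dense {θ : ℝ | S θ ≠ 0} := by
    have h1 := hZ.dense_compl ℝ
    have h2 : {θ : ℝ | S θ = 0}ᶜ = {θ : ℝ | S θ ≠ 0} := by ext θ; simp
    rwa [h2] at h1
  have him : ∀ θ : ℝ, (u θ).im = 0 := by
    have heq : (fun θ => (u θ).im) = (fun _ => (0:ℝ)) :=
      Continuous.ext_on hdense (Complex.continuous_im.comp hucont) continuous_const
        (fun θ hθ => him0 θ hθ)
    exact fun θ => congrFun heq θ
  have hure : ∀ θ : ℝ, (u θ).re ≠ 0 := by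
    intro θ h
    exact hu0 θ (by rw [Complex.ext_iff]; simp [h, him θ])
  have hper : ∀ θ : ℝ, u (θ + 2*Real.pi) = - u θ := by
    intro θ
    have h1 : Complex.exp ((↑(θ + 2*Real.pi):ℂ) * I) = Complex.exp ((θ:ℂ) * I) := by
      push_cast
      rw [add_mul, Complex.exp_add, Complex.exp_two_pi_mul_I, mul_one]
    have h2 : Complex.exp (((((m:ℝ)*(θ+2*Real.pi) + A)/2 : ℝ)) * I)
        = Complex.exp ((((m:ℝ)*θ + A)/2 : ℝ) * I) * (-1) := by
      rw [show (((m:ℝ)*(θ+2*Real.pi) + A)/2 : ℝ) = (((m:ℝ)*θ + A)/2) + m * Real.pi from by ring]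
      rw [Complex.ofReal_add, add_mul, Complex.exp_add]
      congr 1
      rw [show ((↑((m:ℝ) * Real.pi) : ℂ) * I) = (m:ℕ) * ((Real.pi:ℂ) * I) from by push_cast; ring]
      rw [Complex.exp_nat_mul, Complex.exp_pi_mul_I]
      exact Odd.neg_one_pow hodd
    rw [hu]
    simp only
    rw [h1, h2]
    ring
  have hvcont : Continuous (fun θ => (u θ).re) := Complex.continuous_re.comp hucont
  have hvper : (u (0 + 2*Real.pi)).re = - (u 0).re := by rw [hper 0, Complex.neg_re]
  have hπ : (0:ℝ) ≤ 0 + 2*Real.pi := by positivity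
  rcases lt_or_gt_of_ne (hure 0) with h | h
  · have h2 : 0 < (u (0 + 2*Real.pi)).re := by rw [hvper]; linarith
    obtain ⟨c, _, hc⟩ := intermediate_value_Icc hπ hvcont.continuousOn ⟨le_of_lt h, le_of_lt h2⟩
    exact hure c hc
  · have h2 : (u (0 + 2*Real.pi)).re < 0 := by rw [hvper]; linarith
    obtain ⟨c, _, hc⟩ := intermediate_value_Icc' hπ hvcont.continuousOn ⟨le_of_lt h2, le_of_lt h⟩
    exact hure c hc

/-- If `ω = s/q` is nonconstant, real on the unit circle (where defined), with `s, q`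
coprime, all roots of `q` on the unit circle, and `deg q` odd, then `ω(𝕋) = ℝ`:
every real `t` is attained as `s(z)/q(z)` for some unimodular `z` with `q(z) ≠ 0`. -/
theorem odd_degree_image_is_real_line (s q : Polynomial ℂ)
    (hcop : IsCoprime s q) (hq : q ≠ 0)
    (hqroots : ∀ z : ℂ, q.IsRoot z → ‖z‖ = 1)
    (hreal : ∀ z : ℂ, ‖z‖ = 1 → q.eval z ≠ 0 →
      ∃ t : ℝ, s.eval z / q.eval z = (t : ℂ))
    (hnc : ¬ ∃ c : ℂ, ∀ z : ℂ, ‖z‖ = 1 → q.eval z ≠ 0 →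
      s.eval z / q.eval z = c)
    (hodd : Odd q.natDegree) :
    ∀ t : ℝ, ∃ z : ℂ, ‖z‖ = 1 ∧ q.eval z ≠ 0 ∧
      s.eval z / q.eval z = (t : ℂ) := by
  intro t
  by_contra hn
  push_neg at hn
  set g : Polynomial ℂ := s - Polynomial.C (t:ℂ) * q with hgdef
  have habs : ∀ w ∈ q.roots, ‖w‖ = 1 := fun w hw => hqroots w (isRoot_of_mem_roots hw)
  have hgz : ∀ z : ℂ, ‖z‖ = 1 → g.eval z ≠ 0 := by
    intro z hz h0
    have hge : s.eval z - (t:ℂ) * q.eval z = 0 := by simpa [hgdef] using h0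
    by_cases hqz : q.eval z = 0
    · have hsz : s.eval z = 0 := by rw [hqz, mul_zero, sub_zero] at hge; exact hge
      obtain ⟨a, b, hab⟩ := hcop
      have h1 := congrArg (eval z) hab
      simp [hsz, hqz] at h1
    · exact hn z hz hqz (by rw [div_eq_iff hqz]; linear_combination hge)
  have hre : ∀ z : ℂ, ‖z‖ = 1 → (q.eval z / g.eval z).im = 0 := by
    intro z hz
    by_cases hqz : q.eval z = 0
    · simp [hqz]
    · obtain ⟨t', ht'⟩ := hreal z hz hqz
      have hsz : s.eval z = (t':ℂ) * q.eval z := by rw [div_eq_iff hqz] at ht'; exact ht'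
      have hgv : g.eval z = ((t' - t : ℝ) : ℂ) * q.eval z := by
        simp only [hgdef, eval_sub, eval_mul, eval_C, hsz]
        push_cast
        ring
      have hne : ((t' - t : ℝ) : ℂ) ≠ 0 := by
        intro h
        exact hgz z hz (by rw [hgv, h, zero_mul])
      have hval : q.eval z / g.eval z = (((t' - t)⁻¹ : ℝ) : ℂ) := by
        rw [hgv]
        push_cast at hne ⊢
        rw [mul_comm, div_mul_eq_div_div, div_self hqz, one_div]
      rw [hval]
      exact Complex.ofReal_im _
  exact aux_contradiction q g hq habs hodd hgz hre
end
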